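/- arXiv:1702.00317 — 5 statements merged into one kernel-verified Lean document; each statement's English description precedes it below -/
import Mathlib

section
/- For the ideal linear regression problem, the SGD iterates satisfy the exact one-step recursion E[||θ_{k+1} - β*||²] = (1 + (α_k² - 2α_k)/d) · E[||θ_k - β*||²] + α_k² · Var(ε). -/
open MeasureTheory Filter Finset
open scoped ENNReal RealInnerProductSpace

/-- For the ideal linear regression problem (X uniform over the columns of an
orthonormal matrix, Y = X'β* + ε with ε mean-zero, bounded, independent of X and
of the current iterate), the SGD iterates satisfy the exact one-step recursion
`E[‖θ_{k+1} - β*‖²] = (1 + (α_k² - 2α_k)/d) E[‖θ_k - β*‖²] + α_k² Var(ε)`. -/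
theorem sgd_ideal_one_step_recursion
    {Ω : Type*} [MeasurableSpace Ω] (μ : Measure Ω) [IsProbabilityMeasure μ]
    (d : ℕ) (hd : 0 < d)
    (Q : Matrix (Fin d) (Fin d) ℝ) (hQ : Q.transpose * Q = 1)
    (col : Fin d → EuclideanSpace ℝ (Fin d)) (hcol : ∀ i j, col j i = Q i j)
    (X : ℕ → Ω → EuclideanSpace ℝ (Fin d)) (ε : ℕ → Ω → ℝ)
    (hXmeas : ∀ k, Measurable (X k)) (hεmeas : ∀ k, Measurable (ε k))
    (hXunif : ∀ k j, μ {ω | X k ω = col j} = (d : ℝ≥0∞)⁻¹)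
    (hεmean : ∀ k, ∫ ω, ε k ω ∂μ = 0)
    (v : ℝ) (hεvar : ∀ k, ∫ ω, (ε k ω) ^ 2 ∂μ = v)
    (M : ℝ) (hεbdd : ∀ k ω, |ε k ω| ≤ M)
    (α : ℕ → ℝ) (hα : ∀ k, 0 ≤ α k)
    (βstar θ0 : EuclideanSpace ℝ (Fin d))
    (Y : ℕ → Ω → ℝ) (hY : ∀ k ω, Y k ω = ⟪X k ω, βstar⟫ + ε k ω)
    (θ : ℕ → Ω → EuclideanSpace ℝ (Fin d))
    (hθ0 : ∀ ω, θ 0 ω = θ0)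
    (hθ : ∀ k ω, θ (k + 1) ω
        = θ k ω + (α k * (Y (k + 1) ω - ⟪X (k + 1) ω, θ k ω⟫)) • X (k + 1) ω)
    (hindepX : ∀ k, ProbabilityTheory.IndepFun (X (k + 1)) (θ k) μ)
    (hindepε : ∀ k,
      ProbabilityTheory.IndepFun (ε (k + 1)) (fun ω => (X (k + 1) ω, θ k ω)) μ)
    (k : ℕ) :
    ∫ ω, ‖θ (k + 1) ω - βstar‖ ^ 2 ∂μ
      = (1 + ((α k) ^ 2 - 2 * α k) / d) * ∫ ω, ‖θ k ω - βstar‖ ^ 2 ∂μ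
        + (α k) ^ 2 * v := by
  classical
  -- orthonormality of the columns
  have hon : ∀ i j : Fin d, ⟪col i, col j⟫ = if i = j then (1:ℝ) else 0 := by
    intro i j
    have h : (Q.transpose * Q) i j = (1 : Matrix (Fin d) (Fin d) ℝ) i j := by rw [hQ]
    rw [Matrix.mul_apply, Matrix.one_apply] at h
    rw [PiLp.inner_apply]
    simp only [RCLike.inner_apply, conj_trivial, hcol]
    simpa [Matrix.transpose_apply, mul_comm] using h
  -- Parseval identity
  have parseval : ∀ x : EuclideanSpace ℝ (Fin d), ∑ j, ⟪col j, x⟫ ^ 2 = ‖x‖ ^ 2 := by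
    have honn : Orthonormal ℝ col := orthonormal_iff_ite.2 (by simpa using hon)
    haveI : Nonempty (Fin d) := ⟨⟨0, hd⟩⟩
    have hcard : Fintype.card (Fin d) = Module.finrank ℝ (EuclideanSpace ℝ (Fin d)) := by
      simp [finrank_euclideanSpace]
    let bb := basisOfOrthonormalOfCardEqFinrank honn hcard
    have hbb : ⇑bb = col := coe_basisOfOrthonormalOfCardEqFinrank honn hcard
    let b : OrthonormalBasis (Fin d) ℝ (EuclideanSpace ℝ (Fin d)) :=
      bb.toOrthonormalBasis (by rwa [hbb])
    have hb : ∀ j, b j = col j := by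
      intro j
      simp [b, Module.Basis.coe_toOrthonormalBasis, hbb]
    intro x
    have h := b.sum_inner_mul_inner x x
    rw [real_inner_self_eq_norm_sq] at h
    rw [← h]
    refine Finset.sum_congr rfl fun j _ => ?_
    rw [hb, real_inner_comm x (col j), sq]
  -- norm of columns is 1
  have hcolnorm : ∀ j, ‖col j‖ = 1 := by
    intro j
    have h := hon j j
    rw [if_pos rfl, real_inner_self_eq_norm_sq] at h
    nlinarith [norm_nonneg (col j)]
  -- injectivity of col
  have hinj : Function.Injective col := by
    intro i j hij
    by_contra h
    have h1 := hon i j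
    rw [if_neg h, hij] at h1
    have h2 := hon j j
    rw [if_pos rfl] at h2
    rw [h1] at h2; exact one_ne_zero h2.symm
  -- measurability of θ
  have hθmeas : ∀ n, Measurable (θ n) := by
    intro n; induction n with
    | zero =>
      have : θ 0 = fun _ => θ0 := funext hθ0
      rw [this]; exact measurable_const
    | succ n ih =>
      have heq : θ (n+1) = fun ω => θ n ω
          + (α n * ((⟪X (n+1) ω, βstar⟫ + ε (n+1) ω) - ⟪X (n+1) ω, θ n ω⟫)) • X (n+1) ω := by
        funext ω; rw [hθ n ω, hY]
      rw [heq]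
      exact ih.add ((((((hXmeas (n+1)).inner measurable_const).add (hεmeas (n+1))).sub
        ((hXmeas (n+1)).inner ih)).const_mul (α n)).smul (hXmeas (n+1)))
  -- a.e. X lies in the range of col
  have hXae : ∀ n, ∀ᵐ ω ∂μ, ∃ j, X n ω = col j := by
    intro n
    have hmeasS : ∀ j : Fin d, MeasurableSet {ω | X n ω = col j} := fun j =>
      (hXmeas n) (measurableSet_singleton (col j))
    have hdisj : Pairwise (Function.onFun Disjoint fun j => {ω | X n ω = col j}) := by
      intro i j hij
      refine Set.disjoint_left.2 fun ω hi hj => hij (hinj ?_)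
      rw [← hi, ← hj]
    have hU : μ (⋃ j, {ω | X n ω = col j}) = 1 := by
      rw [measure_iUnion hdisj hmeasS, tsum_fintype]
      simp only [hXunif n, Finset.sum_const, Finset.card_univ, Fintype.card_fin, nsmul_eq_mul]
      exact ENNReal.mul_inv_cancel (by exact_mod_cast hd.ne') (by simp)
    have hcompl : μ ({ω | ∃ j, X n ω = col j}ᶜ) = 0 := by
      have hs : {ω | ∃ j, X n ω = col j} = ⋃ j, {ω | X n ω = col j} := by
        ext ω; simp
      rw [hs, measure_compl (MeasurableSet.iUnion hmeasS) (measure_ne_top μ _), hU,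
        measure_univ, tsub_self]
    exact (ae_iff).2 hcompl
  -- a.e. bound on θ
  have hθbdd : ∀ n, ∃ C : ℝ, ∀ᵐ ω ∂μ, ‖θ n ω‖ ≤ C := by
    intro n; induction n with
    | zero => exact ⟨‖θ0‖, ae_of_all _ fun ω => by rw [hθ0]⟩
    | succ n ih =>
      obtain ⟨C, hC⟩ := ih
      refine ⟨C + α n * (‖βstar‖ + M + C), ?_⟩
      filter_upwards [hC, hXae (n+1)] with ω hCω hω
      obtain ⟨j, hj⟩ := hω
      have hZ : ‖X (n+1) ω‖ = 1 := by rw [hj]; exact hcolnorm j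
      rw [hθ n ω]
      calc ‖θ n ω + (α n * (Y (n+1) ω - ⟪X (n+1) ω, θ n ω⟫)) • X (n+1) ω‖
          ≤ ‖θ n ω‖ + ‖(α n * (Y (n+1) ω - ⟪X (n+1) ω, θ n ω⟫)) • X (n+1) ω‖ := norm_add_le _ _
        _ ≤ C + α n * (‖βstar‖ + M + C) := by
            rw [norm_smul, hZ, mul_one, Real.norm_eq_abs, abs_mul, abs_of_nonneg (hα n)]
            have h1 : |Y (n+1) ω - ⟪X (n+1) ω, θ n ω⟫| ≤ ‖βstar‖ + M + C := by
              rw [hY]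
              have i1 : |⟪X (n+1) ω, βstar⟫| ≤ ‖βstar‖ := by
                have := abs_real_inner_le_norm (X (n+1) ω) βstar
                rwa [hZ, one_mul] at this
              have i2 : |⟪X (n+1) ω, θ n ω⟫| ≤ C := by
                have := abs_real_inner_le_norm (X (n+1) ω) (θ n ω)
                rw [hZ, one_mul] at this
                exact this.trans hCω
              have i3 := hεbdd (n+1) ω
              calc |⟪X (n+1) ω, βstar⟫ + ε (n+1) ω - ⟪X (n+1) ω, θ n ω⟫|
                  ≤ |⟪X (n+1) ω, βstar⟫| + |ε (n+1) ω| + |⟪X (n+1) ω, θ n ω⟫| := by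
                    exact (abs_sub _ _).trans (by gcongr; exact abs_add_le _ _)
                _ ≤ ‖βstar‖ + M + C := by gcongr
            have := hα n
            nlinarith
  -- setup
  set a := α k with hadef
  obtain ⟨C, hC⟩ := hθbdd k
  set Ce := C + ‖βstar‖ with hCedef
  have hebd : ∀ᵐ ω ∂μ, ‖θ k ω - βstar‖ ≤ Ce := by
    filter_upwards [hC] with ω hω
    calc ‖θ k ω - βstar‖ ≤ ‖θ k ω‖ + ‖βstar‖ := norm_sub_le _ _
      _ ≤ Ce := by rw [hCedef]; gcongr
  have hpbd : ∀ᵐ ω ∂μ, |⟪X (k+1) ω, θ k ω - βstar⟫| ≤ Ce := by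
    filter_upwards [hebd, hXae (k+1)] with ω h1 h2
    obtain ⟨j, hj⟩ := h2
    have hZ : ‖X (k+1) ω‖ = 1 := by rw [hj]; exact hcolnorm j
    calc |⟪X (k+1) ω, θ k ω - βstar⟫| ≤ ‖X (k+1) ω‖ * ‖θ k ω - βstar‖ :=
          abs_real_inner_le_norm _ _
      _ ≤ Ce := by rw [hZ, one_mul]; exact h1
  have hem : Measurable (fun ω => θ k ω - βstar) := (hθmeas k).sub measurable_const
  have hpm : Measurable (fun ω => ⟪X (k+1) ω, θ k ω - βstar⟫) := (hXmeas (k+1)).inner hem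
  have hqm : Measurable (ε (k+1)) := hεmeas (k+1)
  -- generic integrability from a.e. bound
  have intbd : ∀ (f : Ω → ℝ) (c : ℝ), Measurable f → (∀ᵐ ω ∂μ, |f ω| ≤ c) → Integrable f μ :=
    fun f c hm hb => Integrable.mono' (integrable_const c) hm.aestronglyMeasurable
      (by simpa [Real.norm_eq_abs] using hb)
  have int1 : Integrable (fun ω => ‖θ k ω - βstar‖ ^ 2) μ := by
    refine intbd _ (Ce^2) (hem.norm.pow_const 2) ?_
    filter_upwards [hebd] with ω hω
    rw [abs_of_nonneg (sq_nonneg _)]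
    exact pow_le_pow_left₀ (norm_nonneg _) hω 2
  have int_qp : Integrable (fun ω => ε (k+1) ω * ⟪X (k+1) ω, θ k ω - βstar⟫) μ := by
    refine intbd _ (M * Ce) (hqm.mul hpm) ?_
    filter_upwards [hpbd] with ω hω
    rw [abs_mul]
    exact mul_le_mul (hεbdd (k+1) ω) hω (abs_nonneg _)
      (le_trans (abs_nonneg _) (hεbdd (k+1) ω))
  have int_p2 : Integrable (fun ω => ⟪X (k+1) ω, θ k ω - βstar⟫ ^ 2) μ := by
    refine intbd _ (Ce^2) (hpm.pow_const 2) ?_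
    filter_upwards [hpbd] with ω hω
    rw [abs_of_nonneg (sq_nonneg _), ← sq_abs]
    exact pow_le_pow_left₀ (abs_nonneg _) hω 2
  have int_q2 : Integrable (fun ω => ε (k+1) ω ^ 2) μ := by
    refine intbd _ (M^2) (hqm.pow_const 2) ?_
    refine ae_of_all _ fun ω => ?_
    rw [abs_of_nonneg (sq_nonneg _), ← sq_abs]
    exact pow_le_pow_left₀ (abs_nonneg _) (hεbdd (k+1) ω) 2
  -- the key a.e. pointwise identity
  have key : ∀ᵐ ω ∂μ, ‖θ (k+1) ω - βstar‖ ^ 2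
      = ‖θ k ω - βstar‖ ^ 2
        + (2*a - 2*a^2) * (ε (k+1) ω * ⟪X (k+1) ω, θ k ω - βstar⟫)
        + (a^2 - 2*a) * ⟪X (k+1) ω, θ k ω - βstar⟫ ^ 2
        + a^2 * ε (k+1) ω ^ 2 := by
    filter_upwards [hXae (k+1)] with ω hω
    obtain ⟨j, hj⟩ := hω
    have hnZ : ‖X (k+1) ω‖ = 1 := by rw [hj]; exact hcolnorm j
    have hc : θ (k+1) ω - βstar
        = (θ k ω - βstar)
          + (a * (ε (k+1) ω - ⟪X (k+1) ω, θ k ω - βstar⟫)) • X (k+1) ω := by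
      rw [hθ k ω]
      have hYc : Y (k+1) ω - ⟪X (k+1) ω, θ k ω⟫
          = ε (k+1) ω - ⟪X (k+1) ω, θ k ω - βstar⟫ := by
        rw [hY, inner_sub_right]; ring
      rw [hYc]
      exact add_sub_right_comm _ _ _
    rw [hc, norm_add_sq_real, inner_smul_right, real_inner_comm (θ k ω - βstar) (X (k+1) ω),
      norm_smul, hnZ, Real.norm_eq_abs, mul_one, sq_abs]
    ring
  rw [integral_congr_ae key]
  have i12 : Integrable (fun ω => ‖θ k ω - βstar‖ ^ 2
      + (2*a - 2*a^2) * (ε (k+1) ω * ⟪X (k+1) ω, θ k ω - βstar⟫)) μ :=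
    int1.add (int_qp.const_mul _)
  have i123 : Integrable (fun ω => ‖θ k ω - βstar‖ ^ 2
      + (2*a - 2*a^2) * (ε (k+1) ω * ⟪X (k+1) ω, θ k ω - βstar⟫)
      + (a^2 - 2*a) * ⟪X (k+1) ω, θ k ω - βstar⟫ ^ 2) μ :=
    i12.add (int_p2.const_mul _)
  rw [integral_add i123 (int_q2.const_mul _),
    integral_add i12 (int_p2.const_mul _),
    integral_add int1 (int_qp.const_mul _),
    integral_const_mul, integral_const_mul, integral_const_mul]
  -- cross term vanishes
  have hqp : ∫ ω, ε (k+1) ω * ⟪X (k+1) ω, θ k ω - βstar⟫ ∂μ = 0 := by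
    have hind : ProbabilityTheory.IndepFun (ε (k+1))
        (fun ω => ⟪X (k+1) ω, θ k ω - βstar⟫) μ := by
      have hm2 : Measurable (fun zt : EuclideanSpace ℝ (Fin d) × EuclideanSpace ℝ (Fin d) =>
          ⟪zt.1, zt.2 - βstar⟫) := measurable_fst.inner (measurable_snd.sub measurable_const)
      exact (hindepε k).comp measurable_id hm2
    have h := hind.integral_mul_eq_mul_integral hqm.aestronglyMeasurable hpm.aestronglyMeasurable
    have h2 : (fun ω => ε (k+1) ω * ⟪X (k+1) ω, θ k ω - βstar⟫)
        = (ε (k+1)) * (fun ω => ⟪X (k+1) ω, θ k ω - βstar⟫) := rfl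
    rw [h2, h, hεmean (k+1), zero_mul]
  -- second moment of the projection
  have hp2 : ∫ ω, ⟪X (k+1) ω, θ k ω - βstar⟫ ^ 2 ∂μ
      = (∫ ω, ‖θ k ω - βstar‖ ^ 2 ∂μ) / d := by
    have hsum : ∀ᵐ ω ∂μ, ⟪X (k+1) ω, θ k ω - βstar⟫ ^ 2
        = ∑ j, (if X (k+1) ω = col j then (1:ℝ) else 0) * ⟪col j, θ k ω - βstar⟫ ^ 2 := by
      filter_upwards [hXae (k+1)] with ω hω
      obtain ⟨j, hj⟩ := hω
      rw [Finset.sum_eq_single j]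
      · rw [if_pos hj, one_mul, hj]
      · intro b _ hb
        rw [if_neg, zero_mul]
        rw [hj]
        exact fun h => hb (hinj h.symm)
      · intro h; exact absurd (Finset.mem_univ j) h
    have hintj : ∀ j : Fin d, Integrable (fun ω => ⟪col j, θ k ω - βstar⟫ ^ 2) μ := by
      intro j
      refine intbd _ (Ce^2) ((measurable_const.inner hem).pow_const 2) ?_
      filter_upwards [hebd] with ω hω
      rw [abs_of_nonneg (sq_nonneg _), ← sq_abs]
      refine pow_le_pow_left₀ (abs_nonneg _) ?_ 2
      calc |⟪col j, θ k ω - βstar⟫| ≤ ‖col j‖ * ‖θ k ω - βstar‖ := abs_real_inner_le_norm _ _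
        _ ≤ Ce := by rw [hcolnorm j, one_mul]; exact hω
    have hintj' : ∀ j : Fin d, Integrable
        (fun ω => (if X (k+1) ω = col j then (1:ℝ) else 0) * ⟪col j, θ k ω - βstar⟫ ^ 2) μ := by
      intro j
      refine intbd _ (Ce^2) (((measurable_const.ite
        ((hXmeas (k+1)) (measurableSet_singleton (col j))) measurable_const).mul
        ((measurable_const.inner hem).pow_const 2))) ?_
      filter_upwards [hebd] with ω hω
      rw [abs_mul]
      have h1 : |if X (k+1) ω = col j then (1:ℝ) else 0| ≤ 1 := by
        split <;> simp
      have h2 : |⟪col j, θ k ω - βstar⟫ ^ 2| ≤ Ce^2 := by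
        rw [abs_of_nonneg (sq_nonneg _), ← sq_abs]
        refine pow_le_pow_left₀ (abs_nonneg _) ?_ 2
        calc |⟪col j, θ k ω - βstar⟫| ≤ ‖col j‖ * ‖θ k ω - βstar‖ := abs_real_inner_le_norm _ _
          _ ≤ Ce := by rw [hcolnorm j, one_mul]; exact hω
      calc |if X (k+1) ω = col j then (1:ℝ) else 0| * |⟪col j, θ k ω - βstar⟫ ^ 2|
          ≤ 1 * (Ce^2) := mul_le_mul h1 h2 (abs_nonneg _) one_pos.le
        _ = Ce^2 := one_mul _
    rw [integral_congr_ae hsum, integral_finset_sum _ (fun j _ => hintj' j)]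
    have hterm : ∀ j : Fin d,
        ∫ ω, (if X (k+1) ω = col j then (1:ℝ) else 0) * ⟪col j, θ k ω - βstar⟫ ^ 2 ∂μ
        = (d:ℝ)⁻¹ * ∫ ω, ⟪col j, θ k ω - βstar⟫ ^ 2 ∂μ := by
      intro j
      have hind : ProbabilityTheory.IndepFun
          (fun ω => if X (k+1) ω = col j then (1:ℝ) else 0)
          (fun ω => ⟪col j, θ k ω - βstar⟫ ^ 2) μ := by
        have h1 : Measurable (fun z : EuclideanSpace ℝ (Fin d) =>
            if z = col j then (1:ℝ) else 0) :=
          measurable_const.ite (measurableSet_singleton (col j)) measurable_const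
        have h2 : Measurable (fun t : EuclideanSpace ℝ (Fin d) => ⟪col j, t - βstar⟫ ^ 2) :=
          (measurable_const.inner (measurable_id.sub measurable_const)).pow_const 2
        exact (hindepX k).comp h1 h2
      have hmi : Measurable (fun ω => if X (k+1) ω = col j then (1:ℝ) else 0) :=
        measurable_const.ite ((hXmeas (k+1)) (measurableSet_singleton (col j))) measurable_const
      have h := hind.integral_mul_eq_mul_integral hmi.aestronglyMeasurable
        ((measurable_const.inner hem).pow_const 2).aestronglyMeasurable
      have h2 : (fun ω => (if X (k+1) ω = col j then (1:ℝ) else 0) * ⟪col j, θ k ω - βstar⟫ ^ 2)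
          = (fun ω => if X (k+1) ω = col j then (1:ℝ) else 0)
            * (fun ω => ⟪col j, θ k ω - βstar⟫ ^ 2) := rfl
      have hI : ∫ ω, (if X (k+1) ω = col j then (1:ℝ) else 0) ∂μ = (d:ℝ)⁻¹ := by
        have hset : MeasurableSet {ω | X (k+1) ω = col j} :=
          (hXmeas (k+1)) (measurableSet_singleton (col j))
        have : (fun ω => if X (k+1) ω = col j then (1:ℝ) else 0)
            = Set.indicator {ω | X (k+1) ω = col j} (fun _ => (1:ℝ)) := by
          funext ω; rw [Set.indicator_apply]; rfl
        rw [this, integral_indicator_const (1:ℝ) hset, measureReal_def, hXunif (k+1) j, smul_eq_mul, mul_one]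
        rw [ENNReal.toReal_inv]
        simp
      rw [h2, h, hI]
    rw [Finset.sum_congr rfl (fun j _ => hterm j), ← Finset.mul_sum,
      ← integral_finset_sum _ (fun j _ => hintj j)]
    have hpars : ∫ ω, ∑ j, ⟪col j, θ k ω - βstar⟫ ^ 2 ∂μ = ∫ ω, ‖θ k ω - βstar‖ ^ 2 ∂μ :=
      integral_congr_ae (ae_of_all _ fun ω => parseval _)
    rw [hpars]
    ring
  rw [hqp, hp2, hεvar (k+1), mul_zero]
  ring
end

section
/- For the ideal linear regression problem, the expected excess risk of the SGD iterate after k+1 steps equals [R(θ_0) - R(β*)] · ∏_{j=0}^{k} (1 + (α_j² - 2α_j)/d) + (Var(ε)/d) · [α_k² + ∑_{j=0}^{k-1} α_j² ∏_{l=j+1}^{k} (1 + (α_l² - 2α_l)/d)]. -/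
open MeasureTheory Filter Finset
open scoped ENNReal RealInnerProductSpace

set_option maxHeartbeats 1000000 in
/-- Ideal problem: the expected excess risk of the SGD iterate after `k+1` steps
equals `[R(θ₀) - R(β*)] ∏_{j=0}^{k} (1 + (α_j² - 2α_j)/d)
+ (Var(ε)/d) [α_k² + ∑_{j=0}^{k-1} α_j² ∏_{l=j+1}^{k} (1 + (α_l² - 2α_l)/d)]`,
where `R(β) = Var(ε) + (1/d)‖β - β*‖²`, so the excess risk of `β` is
`(1/d)‖β - β*‖²`. -/
theorem sgd_ideal_expected_excess_risk
    {Ω : Type*} [MeasurableSpace Ω] (μ : Measure Ω) [IsProbabilityMeasure μ]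
    (d : ℕ) (hd : 0 < d)
    (Q : Matrix (Fin d) (Fin d) ℝ) (hQ : Q.transpose * Q = 1)
    (col : Fin d → EuclideanSpace ℝ (Fin d)) (hcol : ∀ i j, col j i = Q i j)
    (X : ℕ → Ω → EuclideanSpace ℝ (Fin d)) (ε : ℕ → Ω → ℝ)
    (hXmeas : ∀ k, Measurable (X k)) (hεmeas : ∀ k, Measurable (ε k))
    (hXunif : ∀ k j, μ {ω | X k ω = col j} = (d : ℝ≥0∞)⁻¹)
    (hεmean : ∀ k, ∫ ω, ε k ω ∂μ = 0)
    (v : ℝ) (hεvar : ∀ k, ∫ ω, (ε k ω) ^ 2 ∂μ = v)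
    (M : ℝ) (hεbdd : ∀ k ω, |ε k ω| ≤ M)
    (α : ℕ → ℝ) (hα : ∀ k, 0 ≤ α k)
    (βstar θ0 : EuclideanSpace ℝ (Fin d))
    (Y : ℕ → Ω → ℝ) (hY : ∀ k ω, Y k ω = ⟪X k ω, βstar⟫ + ε k ω)
    (θ : ℕ → Ω → EuclideanSpace ℝ (Fin d))
    (hθ0 : ∀ ω, θ 0 ω = θ0)
    (hθ : ∀ k ω, θ (k + 1) ω
        = θ k ω + (α k * (Y (k + 1) ω - ⟪X (k + 1) ω, θ k ω⟫)) • X (k + 1) ω)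
    (hindepX : ∀ k, ProbabilityTheory.IndepFun (X (k + 1)) (θ k) μ)
    (hindepε : ∀ k,
      ProbabilityTheory.IndepFun (ε (k + 1)) (fun ω => (X (k + 1) ω, θ k ω)) μ)
    (k : ℕ) :
    (1 / (d : ℝ)) * ∫ ω, ‖θ (k + 1) ω - βstar‖ ^ 2 ∂μ
      = ((1 / (d : ℝ)) * ‖θ0 - βstar‖ ^ 2)
          * ∏ j ∈ Finset.range (k + 1), (1 + ((α j) ^ 2 - 2 * α j) / d)
        + (v / d) * ((α k) ^ 2
            + ∑ j ∈ Finset.range k, (α j) ^ 2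
                * ∏ l ∈ Finset.Ico (j + 1) (k + 1),
                    (1 + ((α l) ^ 2 - 2 * α l) / d)) := by
  classical
  have hd' : (d : ℝ) ≠ 0 := Nat.cast_ne_zero.mpr hd.ne'
  -- columns are orthonormal
  have hinner : ∀ j j', (⟪col j, col j'⟫ : ℝ) = if j = j' then 1 else 0 := by
    intro j j'
    have h := congrFun (congrFun hQ j) j'
    simp only [Matrix.mul_apply, Matrix.transpose_apply, Matrix.one_apply] at h
    calc (⟪col j, col j'⟫ : ℝ) = ∑ i, col j i * col j' i := by
          simp [PiLp.inner_apply, RCLike.inner_apply, mul_comm]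
      _ = ∑ i, Q i j * Q i j' := by simp [hcol]
      _ = if j = j' then 1 else 0 := h
  have hON : Orthonormal ℝ col := by
    rw [orthonormal_iff_ite]
    intro i j
    simpa using hinner i j
  have hcolinj : Function.Injective col := hON.linearIndependent.injective
  have hcolnorm : ∀ j, ‖col j‖ = 1 := fun j => hON.1 j
  haveI : Nonempty (Fin d) := ⟨⟨0, hd⟩⟩
  have hcard : Fintype.card (Fin d) = Module.finrank ℝ (EuclideanSpace ℝ (Fin d)) := by
    simp [finrank_euclideanSpace]
  let bb : Module.Basis (Fin d) ℝ (EuclideanSpace ℝ (Fin d)) :=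
    basisOfOrthonormalOfCardEqFinrank hON hcard
  have hbb : ⇑bb = col := coe_basisOfOrthonormalOfCardEqFinrank hON hcard
  let b : OrthonormalBasis (Fin d) ℝ (EuclideanSpace ℝ (Fin d)) :=
    OrthonormalBasis.mk hON (by rw [← hbb]; exact bb.span_eq.ge)
  have hb : ⇑b = col := OrthonormalBasis.coe_mk _ _
  have hsum : ∀ e : EuclideanSpace ℝ (Fin d), ∑ j, (⟪col j, e⟫ : ℝ) ^ 2 = ‖e‖ ^ 2 := by
    intro e
    rw [← real_inner_self_eq_norm_sq, ← b.sum_inner_mul_inner e e]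
    refine Finset.sum_congr rfl fun j _ => ?_
    rw [hb, real_inner_comm e (col j)]; ring
  -- a.e., X n lands in the range of col
  have hXae : ∀ n, ∀ᵐ ω ∂μ, ∃ j, X n ω = col j := by
    intro n
    have hmeas : ∀ j : Fin d, MeasurableSet {ω | X n ω = col j} := fun j =>
      (hXmeas n) (measurableSet_singleton (col j))
    have hdisj : Pairwise (Function.onFun Disjoint fun j : Fin d => {ω | X n ω = col j}) := by
      intro i j hij
      refine Set.disjoint_left.mpr fun ω h1 h2 => hij (hcolinj ?_)
      rw [Set.mem_setOf_eq] at h1 h2; rw [← h1, ← h2]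
    have hU : μ (⋃ j : Fin d, {ω | X n ω = col j}) = 1 := by
      rw [measure_iUnion hdisj hmeas]
      simp only [hXunif]
      rw [tsum_fintype]
      simp only [Finset.sum_const, Finset.card_univ, Fintype.card_fin, nsmul_eq_mul]
      rw [ENNReal.mul_inv_cancel (by exact_mod_cast hd.ne') (by simp)]
    have h0 : μ (⋃ j : Fin d, {ω | X n ω = col j})ᶜ = 0 := by
      rw [measure_compl (MeasurableSet.iUnion hmeas) (measure_ne_top μ _), hU, measure_univ,
        tsub_self]
    filter_upwards [measure_eq_zero_iff_ae_notMem.mp h0] with ω hω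
    simp only [Set.mem_compl_iff, Set.mem_iUnion, not_exists, not_forall, not_not] at hω
    exact not_not.mp (by simpa using hω)
  -- measurability of the iterates
  have hθmeas : ∀ n, Measurable (θ n) := by
    intro n
    induction n with
    | zero =>
      have : θ 0 = fun _ => θ0 := funext hθ0
      rw [this]; exact measurable_const
    | succ n ih =>
      have hYm : Measurable (Y (n + 1)) := by
        have : Y (n + 1) = fun ω => (⟪X (n + 1) ω, βstar⟫ : ℝ) + ε (n + 1) ω :=
          funext (hY (n + 1))
        rw [this]
        exact ((hXmeas (n + 1)).inner measurable_const).add (hεmeas (n + 1))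
      have : θ (n + 1) = fun ω =>
          θ n ω + (α n * (Y (n + 1) ω - ⟪X (n + 1) ω, θ n ω⟫)) • X (n + 1) ω :=
        funext (hθ n)
      rw [this]
      exact ih.add
        ((measurable_const.mul (hYm.sub ((hXmeas (n + 1)).inner ih))).smul (hXmeas (n + 1)))
  -- a.e. boundedness of the iterates
  have hθbdd : ∀ n, ∃ C : ℝ, 0 ≤ C ∧ ∀ᵐ ω ∂μ, ‖θ n ω‖ ≤ C := by
    intro n
    induction n with
    | zero =>
      exact ⟨‖θ0‖, norm_nonneg _, Filter.Eventually.of_forall fun ω => by rw [hθ0 ω]⟩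
    | succ n ih =>
      obtain ⟨C, hC0, hC⟩ := ih
      refine ⟨C + α n * (M + ‖βstar‖ + C), ?_, ?_⟩
      · have hM0 : 0 ≤ M := by
          obtain ⟨ω0⟩ : Nonempty Ω := by
            by_contra h
            rw [not_nonempty_iff] at h
            have : μ Set.univ = 0 := by simp [Set.univ_eq_empty_iff.mpr h]
            simp [measure_univ] at this
          exact le_trans (abs_nonneg _) (hεbdd 0 ω0)
        have := hα n
        positivity
      · filter_upwards [hC, hXae (n + 1)] with ω hCω hXω
        obtain ⟨j, hj⟩ := hXω
        have hXn : ‖X (n + 1) ω‖ = 1 := by rw [hj, hcolnorm]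
        have hM0 : 0 ≤ M := le_trans (abs_nonneg _) (hεbdd 0 ω)
        rw [hθ n ω]
        have h1 : ‖θ n ω + (α n * (Y (n + 1) ω - ⟪X (n + 1) ω, θ n ω⟫)) • X (n + 1) ω‖
            ≤ ‖θ n ω‖ + |α n * (Y (n + 1) ω - ⟪X (n + 1) ω, θ n ω⟫)| * ‖X (n + 1) ω‖ := by
          refine le_trans (norm_add_le _ _) ?_
          rw [norm_smul, Real.norm_eq_abs]
        have h2 : |Y (n + 1) ω - ⟪X (n + 1) ω, θ n ω⟫| ≤ M + ‖βstar‖ + C := by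
          rw [hY (n + 1) ω]
          have hb1 : |(⟪X (n + 1) ω, βstar⟫ : ℝ)| ≤ ‖βstar‖ := by
            calc |(⟪X (n + 1) ω, βstar⟫ : ℝ)| ≤ ‖X (n + 1) ω‖ * ‖βstar‖ :=
                  abs_real_inner_le_norm _ _
              _ = ‖βstar‖ := by rw [hXn, one_mul]
          have hb2 : |(⟪X (n + 1) ω, θ n ω⟫ : ℝ)| ≤ C := by
            calc |(⟪X (n + 1) ω, θ n ω⟫ : ℝ)| ≤ ‖X (n + 1) ω‖ * ‖θ n ω‖ :=
                  abs_real_inner_le_norm _ _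
              _ ≤ C := by rw [hXn, one_mul]; exact hCω
          have hb3 := hεbdd (n + 1) ω
          calc |(⟪X (n + 1) ω, βstar⟫ : ℝ) + ε (n + 1) ω - ⟪X (n + 1) ω, θ n ω⟫|
              ≤ |(⟪X (n + 1) ω, βstar⟫ : ℝ)| + |ε (n + 1) ω| + |(⟪X (n + 1) ω, θ n ω⟫ : ℝ)| := by
                have h4 := abs_sub ((⟪X (n + 1) ω, βstar⟫ : ℝ) + ε (n + 1) ω)
                  ((⟪X (n + 1) ω, θ n ω⟫ : ℝ))
                have h5 := abs_add_le (⟪X (n + 1) ω, βstar⟫ : ℝ) (ε (n + 1) ω)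
                linarith
              _ ≤ M + ‖βstar‖ + C := by linarith
        calc ‖θ n ω + (α n * (Y (n + 1) ω - ⟪X (n + 1) ω, θ n ω⟫)) • X (n + 1) ω‖
            ≤ ‖θ n ω‖ + |α n * (Y (n + 1) ω - ⟪X (n + 1) ω, θ n ω⟫)| * ‖X (n + 1) ω‖ := h1
          _ ≤ C + α n * (M + ‖βstar‖ + C) := by
              rw [hXn, mul_one, abs_mul, abs_of_nonneg (hα n)]
              have := mul_le_mul_of_nonneg_left h2 (hα n)
              linarith
  -- helper: bounded measurable functions are integrable
  have bdd_int : ∀ (f : Ω → ℝ) (K : ℝ), Measurable f → (∀ᵐ ω ∂μ, |f ω| ≤ K) →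
      Integrable f μ := fun f K hf h =>
    (integrable_const K).mono' hf.aestronglyMeasurable (by simpa [Real.norm_eq_abs] using h)
  -- the one-step recursion
  have key : ∀ n, ∫ ω, ‖θ (n + 1) ω - βstar‖ ^ 2 ∂μ
      = (1 + ((α n) ^ 2 - 2 * α n) / d) * ∫ ω, ‖θ n ω - βstar‖ ^ 2 ∂μ + (α n) ^ 2 * v := by
    intro n
    obtain ⟨C, hC0, hC⟩ := hθbdd n
    set D : ℝ := C + ‖βstar‖ with hDdef
    have hD0 : 0 ≤ D := add_nonneg hC0 (norm_nonneg _)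
    have hemeas : Measurable (fun ω => θ n ω - βstar) := (hθmeas n).sub measurable_const
    have hebdd : ∀ᵐ ω ∂μ, ‖θ n ω - βstar‖ ≤ D := by
      filter_upwards [hC] with ω h
      calc ‖θ n ω - βstar‖ ≤ ‖θ n ω‖ + ‖βstar‖ := norm_sub_le _ _
        _ ≤ D := by rw [hDdef]; linarith
    have hAnorm : ∀ᵐ ω ∂μ, ‖X (n + 1) ω‖ = 1 := by
      filter_upwards [hXae (n + 1)] with ω hω
      obtain ⟨j, hj⟩ := hω
      rw [hj, hcolnorm]
    have htmeas : Measurable (fun ω => (⟪X (n + 1) ω, θ n ω - βstar⟫ : ℝ)) :=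
      (hXmeas (n + 1)).inner hemeas
    have htbdd : ∀ᵐ ω ∂μ, |(⟪X (n + 1) ω, θ n ω - βstar⟫ : ℝ)| ≤ D := by
      filter_upwards [hAnorm, hebdd] with ω h1 h2
      calc |(⟪X (n + 1) ω, θ n ω - βstar⟫ : ℝ)| ≤ ‖X (n + 1) ω‖ * ‖θ n ω - βstar‖ :=
            abs_real_inner_le_norm _ _
        _ ≤ D := by rw [h1, one_mul]; exact h2
    haveI : Nonempty Ω := by
      by_contra hne
      rw [not_nonempty_iff] at hne
      have h0 : μ Set.univ = 0 := by simp [Set.univ_eq_empty_iff.mpr hne]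
      simp [measure_univ] at h0
    have hM0 : 0 ≤ M := le_trans (abs_nonneg _) (hεbdd 0 (Classical.arbitrary Ω))
    -- integrability facts
    have intnorm : Integrable (fun ω => ‖θ n ω - βstar‖ ^ 2) μ := by
      refine bdd_int _ (D ^ 2) (hemeas.norm.pow_const 2) ?_
      filter_upwards [hebdd] with ω h
      rw [abs_of_nonneg (by positivity)]
      exact pow_le_pow_left₀ (norm_nonneg _) h 2
    have intT2 : Integrable (fun ω => (⟪X (n + 1) ω, θ n ω - βstar⟫ : ℝ) ^ 2) μ := by
      refine bdd_int _ (D ^ 2) (htmeas.pow_const 2) ?_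
      filter_upwards [htbdd] with ω h
      rw [abs_of_nonneg (by positivity), ← sq_abs]
      exact pow_le_pow_left₀ (abs_nonneg _) h 2
    have intT : Integrable (fun ω => (⟪X (n + 1) ω, θ n ω - βstar⟫ : ℝ)) μ :=
      bdd_int _ D htmeas htbdd
    have intS : Integrable (ε (n + 1)) μ :=
      bdd_int _ M (hεmeas (n + 1)) (Filter.Eventually.of_forall (hεbdd (n + 1)))
    have intS2 : Integrable (fun ω => (ε (n + 1) ω) ^ 2) μ := by
      refine bdd_int _ (M ^ 2) ((hεmeas (n + 1)).pow_const 2) ?_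
      refine Filter.Eventually.of_forall fun ω => ?_
      rw [abs_of_nonneg (by positivity), ← sq_abs]
      exact pow_le_pow_left₀ (abs_nonneg _) (hεbdd (n + 1) ω) 2
    have intST : Integrable (fun ω => ε (n + 1) ω * (⟪X (n + 1) ω, θ n ω - βstar⟫ : ℝ)) μ := by
      refine bdd_int _ (M * D) ((hεmeas (n + 1)).mul htmeas) ?_
      filter_upwards [htbdd] with ω h
      rw [abs_mul]
      exact mul_le_mul (hεbdd (n + 1) ω) h (abs_nonneg _) hM0
    -- the key second-moment computation for the inner product with X
    have hI2 : ∫ ω, (⟪X (n + 1) ω, θ n ω - βstar⟫ : ℝ) ^ 2 ∂μ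
        = (1 / (d : ℝ)) * ∫ ω, ‖θ n ω - βstar‖ ^ 2 ∂μ := by
      have hae : (fun ω => (⟪X (n + 1) ω, θ n ω - βstar⟫ : ℝ) ^ 2)
          =ᵐ[μ] fun ω => ∑ j,
            (Set.indicator {col j} (fun _ => (1 : ℝ)) (X (n + 1) ω))
              * (⟪col j, θ n ω - βstar⟫ : ℝ) ^ 2 := by
        filter_upwards [hXae (n + 1)] with ω hω
        obtain ⟨j₀, hj₀⟩ := hω
        rw [hj₀, Finset.sum_eq_single j₀]
        · simp [Set.indicator_apply]
        · intro j _ hj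
          rw [Set.indicator_apply, if_neg, zero_mul]
          simp only [Set.mem_singleton_iff]
          exact fun h => hj (hcolinj h.symm)
        · simp
      rw [integral_congr_ae hae]
      have hψmeas : ∀ j : Fin d,
          Measurable (fun x : EuclideanSpace ℝ (Fin d) => (⟪col j, x - βstar⟫ : ℝ) ^ 2) :=
        fun j => (measurable_const.inner (measurable_id.sub measurable_const)).pow_const 2
      have hφmeas : ∀ j : Fin d,
          Measurable (Set.indicator ({col j} : Set (EuclideanSpace ℝ (Fin d)))
            (fun _ => (1 : ℝ))) :=
        fun j => measurable_const.indicator (measurableSet_singleton _)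
      have hψbdd : ∀ j, ∀ᵐ ω ∂μ, |(⟪col j, θ n ω - βstar⟫ : ℝ) ^ 2| ≤ D ^ 2 := by
        intro j
        filter_upwards [hebdd] with ω h
        rw [abs_of_nonneg (by positivity), ← sq_abs]
        refine pow_le_pow_left₀ (abs_nonneg _) ?_ 2
        calc |(⟪col j, θ n ω - βstar⟫ : ℝ)| ≤ ‖col j‖ * ‖θ n ω - βstar‖ :=
              abs_real_inner_le_norm _ _
          _ ≤ D := by rw [hcolnorm, one_mul]; exact h
      have hψint : ∀ j, Integrable (fun ω => (⟪col j, θ n ω - βstar⟫ : ℝ) ^ 2) μ :=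
        fun j => bdd_int _ (D ^ 2) (((measurable_const.inner hemeas)).pow_const 2) (hψbdd j)
      have hφint : ∀ j, Integrable (fun ω =>
          Set.indicator {col j} (fun _ => (1 : ℝ)) (X (n + 1) ω)) μ := by
        intro j
        refine bdd_int _ 1 ((hφmeas j).comp (hXmeas (n + 1))) ?_
        refine Filter.Eventually.of_forall fun ω => ?_
        rw [Set.indicator_apply]; split <;> simp
      have hint_j : ∀ j ∈ Finset.univ, Integrable (fun ω =>
          (Set.indicator {col j} (fun _ => (1 : ℝ)) (X (n + 1) ω))
            * (⟪col j, θ n ω - βstar⟫ : ℝ) ^ 2) μ := by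
        intro j _
        refine bdd_int _ (D ^ 2) (((hφmeas j).comp (hXmeas (n + 1))).mul
          ((measurable_const.inner hemeas).pow_const 2)) ?_
        filter_upwards [hψbdd j] with ω h
        rw [abs_mul]
        have h1 : |Set.indicator {col j} (fun _ => (1 : ℝ)) (X (n + 1) ω)| ≤ 1 := by
          rw [Set.indicator_apply]; split <;> simp
        calc |Set.indicator {col j} (fun _ => (1 : ℝ)) (X (n + 1) ω)|
              * |(⟪col j, θ n ω - βstar⟫ : ℝ) ^ 2|
            ≤ 1 * (D ^ 2) := mul_le_mul h1 h (abs_nonneg _) one_pos.le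
          _ = D ^ 2 := one_mul _
      rw [integral_finset_sum _ hint_j]
      have heach : ∀ j : Fin d, ∫ ω,
          (Set.indicator {col j} (fun _ => (1 : ℝ)) (X (n + 1) ω))
            * (⟪col j, θ n ω - βstar⟫ : ℝ) ^ 2 ∂μ
          = (1 / (d : ℝ)) * ∫ ω, (⟪col j, θ n ω - βstar⟫ : ℝ) ^ 2 ∂μ := by
        intro j
        have hindep : ProbabilityTheory.IndepFun
            (fun ω => Set.indicator {col j} (fun _ => (1 : ℝ)) (X (n + 1) ω))
            (fun ω => (⟪col j, θ n ω - βstar⟫ : ℝ) ^ 2) μ :=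
          (hindepX n).comp (hφmeas j) (hψmeas j)
        have hmul := hindep.integral_mul_eq_mul_integral (hφint j).aestronglyMeasurable (hψint j).aestronglyMeasurable
        have hfst : ∫ ω, Set.indicator {col j} (fun _ => (1 : ℝ)) (X (n + 1) ω) ∂μ
            = 1 / (d : ℝ) := by
          have hA : (fun ω => Set.indicator {col j} (fun _ => (1 : ℝ)) (X (n + 1) ω))
              = Set.indicator ((X (n + 1)) ⁻¹' {col j}) (fun _ => (1 : ℝ)) := by
            funext ω
            simp [Set.indicator_apply, Set.mem_preimage]
          rw [hA, integral_indicator_const (1 : ℝ) ((hXmeas (n + 1))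
            (measurableSet_singleton _))]
          have hset : (X (n + 1)) ⁻¹' {col j} = {ω | X (n + 1) ω = col j} := rfl
          rw [hset, measureReal_def, hXunif]
          rw [smul_eq_mul, mul_one, ENNReal.toReal_inv]
          simp
        calc ∫ ω, (Set.indicator {col j} (fun _ => (1 : ℝ)) (X (n + 1) ω))
              * (⟪col j, θ n ω - βstar⟫ : ℝ) ^ 2 ∂μ
            = (∫ ω, Set.indicator {col j} (fun _ => (1 : ℝ)) (X (n + 1) ω) ∂μ)
              * ∫ ω, (⟪col j, θ n ω - βstar⟫ : ℝ) ^ 2 ∂μ := hmul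
          _ = (1 / (d : ℝ)) * ∫ ω, (⟪col j, θ n ω - βstar⟫ : ℝ) ^ 2 ∂μ := by rw [hfst]
      calc ∑ j, ∫ ω, (Set.indicator {col j} (fun _ => (1 : ℝ)) (X (n + 1) ω))
            * (⟪col j, θ n ω - βstar⟫ : ℝ) ^ 2 ∂μ
          = ∑ j, (1 / (d : ℝ)) * ∫ ω, (⟪col j, θ n ω - βstar⟫ : ℝ) ^ 2 ∂μ :=
            Finset.sum_congr rfl fun j _ => heach j
        _ = (1 / (d : ℝ)) * ∑ j, ∫ ω, (⟪col j, θ n ω - βstar⟫ : ℝ) ^ 2 ∂μ := by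
            rw [Finset.mul_sum]
        _ = (1 / (d : ℝ)) * ∫ ω, ∑ j, (⟪col j, θ n ω - βstar⟫ : ℝ) ^ 2 ∂μ := by
            rw [integral_finset_sum _ (fun j _ => hψint j)]
        _ = (1 / (d : ℝ)) * ∫ ω, ‖θ n ω - βstar‖ ^ 2 ∂μ := by
            congr 1
            refine integral_congr_ae (Filter.Eventually.of_forall fun ω => ?_)
            exact hsum (θ n ω - βstar)
    -- the cross term with the noise vanishes
    have hI3 : ∫ ω, ε (n + 1) ω * (⟪X (n + 1) ω, θ n ω - βstar⟫ : ℝ) ∂μ = 0 := by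
      have hψ : Measurable (fun p : EuclideanSpace ℝ (Fin d) × EuclideanSpace ℝ (Fin d) =>
          (⟪p.1, p.2 - βstar⟫ : ℝ)) :=
        measurable_fst.inner (measurable_snd.sub measurable_const)
      have hindep : ProbabilityTheory.IndepFun (ε (n + 1))
          (fun ω => (⟪X (n + 1) ω, θ n ω - βstar⟫ : ℝ)) μ :=
        (hindepε n).comp measurable_id hψ
      have hmul := hindep.integral_mul_eq_mul_integral intS.aestronglyMeasurable intT.aestronglyMeasurable
      rw [show (ε (n + 1) * fun ω => (⟪X (n + 1) ω, θ n ω - βstar⟫ : ℝ))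
          = fun ω => ε (n + 1) ω * (⟪X (n + 1) ω, θ n ω - βstar⟫ : ℝ) from rfl] at hmul
      rw [hmul, hεmean (n + 1), zero_mul]
    -- a.e. pointwise expansion of the squared norm
    have hpt : (fun ω => ‖θ (n + 1) ω - βstar‖ ^ 2) =ᵐ[μ]
        fun ω => ‖θ n ω - βstar‖ ^ 2
          + ((α n) ^ 2 - 2 * α n) * (⟪X (n + 1) ω, θ n ω - βstar⟫ : ℝ) ^ 2
          + (α n) ^ 2 * (ε (n + 1) ω) ^ 2
          + (2 * α n - 2 * (α n) ^ 2)
            * (ε (n + 1) ω * (⟪X (n + 1) ω, θ n ω - βstar⟫ : ℝ)) := by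
      filter_upwards [hAnorm] with ω hA1
      have hc : θ (n + 1) ω - βstar = (θ n ω - βstar)
          + (α n * (ε (n + 1) ω - ⟪X (n + 1) ω, θ n ω - βstar⟫)) • X (n + 1) ω := by
        rw [hθ n ω, hY (n + 1) ω, inner_sub_right]
        module
      rw [hc, norm_add_sq_real, real_inner_smul_right, norm_smul, hA1, mul_one,
        Real.norm_eq_abs, sq_abs, real_inner_comm (θ n ω - βstar) (X (n + 1) ω)]
      ring
    have e1 : Integrable (fun ω => ‖θ n ω - βstar‖ ^ 2
        + ((α n) ^ 2 - 2 * α n) * (⟪X (n + 1) ω, θ n ω - βstar⟫ : ℝ) ^ 2) μ :=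
      intnorm.add (intT2.const_mul _)
    have e2 : Integrable (fun ω => ‖θ n ω - βstar‖ ^ 2
        + ((α n) ^ 2 - 2 * α n) * (⟪X (n + 1) ω, θ n ω - βstar⟫ : ℝ) ^ 2
        + (α n) ^ 2 * (ε (n + 1) ω) ^ 2) μ := e1.add (intS2.const_mul _)
    rw [integral_congr_ae hpt, integral_add e2 (intST.const_mul _),
      integral_add e1 (intS2.const_mul _), integral_add intnorm (intT2.const_mul _),
      integral_const_mul, integral_const_mul, integral_const_mul, hI2, hI3, hεvar (n + 1)]
    ring
  -- value of the initial risk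
  have hE0 : ∫ ω, ‖θ 0 ω - βstar‖ ^ 2 ∂μ = ‖θ0 - βstar‖ ^ 2 := by
    have : (fun ω => ‖θ 0 ω - βstar‖ ^ 2) = fun _ => ‖θ0 - βstar‖ ^ 2 := by
      funext ω; rw [hθ0 ω]
    rw [this, integral_const, probReal_univ, one_smul]
  -- closed form by induction
  have main : ∀ n, ∫ ω, ‖θ (n + 1) ω - βstar‖ ^ 2 ∂μ
      = ‖θ0 - βstar‖ ^ 2 * ∏ j ∈ Finset.range (n + 1), (1 + ((α j) ^ 2 - 2 * α j) / d)
        + v * ((α n) ^ 2 + ∑ j ∈ Finset.range n, (α j) ^ 2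
            * ∏ l ∈ Finset.Ico (j + 1) (n + 1), (1 + ((α l) ^ 2 - 2 * α l) / d)) := by
    intro n
    induction n with
    | zero =>
      rw [key 0, hE0, Finset.prod_range_one]
      simp only [Finset.range_zero, Finset.sum_empty, add_zero]
      ring
    | succ n ih =>
      have hsn : ∑ j ∈ Finset.range (n + 1), (α j) ^ 2
            * ∏ l ∈ Finset.Ico (j + 1) (n + 1 + 1), (1 + ((α l) ^ 2 - 2 * α l) / d)
          = (∑ j ∈ Finset.range n, (α j) ^ 2
              * ∏ l ∈ Finset.Ico (j + 1) (n + 1), (1 + ((α l) ^ 2 - 2 * α l) / d))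
                * (1 + ((α (n + 1)) ^ 2 - 2 * α (n + 1)) / d)
            + (α n) ^ 2 * (1 + ((α (n + 1)) ^ 2 - 2 * α (n + 1)) / d) := by
        rw [Finset.sum_range_succ]
        congr 1
        · rw [Finset.sum_mul]
          refine Finset.sum_congr rfl fun j hj => ?_
          rw [Finset.prod_Ico_succ_top (Nat.succ_le_succ (Finset.mem_range.mp hj).le)]
          ring
        · rw [Finset.prod_Ico_succ_top le_rfl, Finset.Ico_self, Finset.prod_empty, one_mul]
      rw [key (n + 1), ih, hsn,
        Finset.prod_range_succ (fun j => (1 + ((α j) ^ 2 - 2 * α j) / (d : ℝ))) (n + 1)]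
      ring
  rw [main k]
  ring
end

section
/- If learning rates α_k ∈ (0,1) satisfy the Robbins-Monro conditions ∑ α_k = ∞ and ∑ α_k² < ∞, then A_k := α_k² + ∑_{j=0}^{k-1} α_j² ∏_{l=j+1}^{k}(1 + (α_l² - 2α_l)/d) converges to 0 as k → ∞, for any fixed d ≥ 1. -/
open Filter Finset

/-- If learning rates `α_k ∈ (0,1)` satisfy the Robbins-Monro conditions
`∑ α_k = ∞` and `∑ α_k² < ∞`, then
`A_k := α_k² + ∑_{j=0}^{k-1} α_j² ∏_{l=j+1}^{k}(1 + (α_l² - 2α_l)/d)` converges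
to `0` as `k → ∞`, for any fixed `d ≥ 1`. -/
theorem robbins_monro_A_tendsto_zero
    (d : ℕ) (hd : 1 ≤ d)
    (α : ℕ → ℝ) (hα : ∀ k, α k ∈ Set.Ioo (0 : ℝ) 1)
    (hdiv : Filter.Tendsto (fun n => ∑ k ∈ Finset.range n, α k)
      Filter.atTop Filter.atTop)
    (hsq : Summable (fun k => (α k) ^ 2))
    (A : ℕ → ℝ)
    (hA : ∀ k, A k = (α k) ^ 2
        + ∑ j ∈ Finset.range k, (α j) ^ 2
            * ∏ l ∈ Finset.Ico (j + 1) (k + 1),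
                (1 + ((α l) ^ 2 - 2 * α l) / d)) :
    Filter.Tendsto A Filter.atTop (nhds 0) := by
  have hd1 : (1:ℝ) ≤ (d:ℝ) := by exact_mod_cast hd
  have hdpos : (0:ℝ) < (d:ℝ) := lt_of_lt_of_le one_pos hd1
  set ρ : ℕ → ℝ := fun l => 1 + ((α l) ^ 2 - 2 * α l) / (d:ℝ) with hρdef
  have hρpos : ∀ l, 0 < ρ l := by
    intro l
    have h1 := (hα l).1
    have h2 := (hα l).2
    have : -1 < ((α l) ^ 2 - 2 * α l) / (d:ℝ) := by
      rw [lt_div_iff₀ hdpos]; nlinarith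
    simp only [hρdef]; linarith
  have hρnonneg : ∀ l, 0 ≤ ρ l := fun l => (hρpos l).le
  have hρle1 : ∀ l, ρ l ≤ 1 := by
    intro l
    have h1 := (hα l).1
    have h2 := (hα l).2
    have : ((α l) ^ 2 - 2 * α l) / (d:ℝ) ≤ 0 :=
      div_nonpos_of_nonpos_of_nonneg (by nlinarith) hdpos.le
    simp only [hρdef]; linarith
  have hρexp : ∀ l, ρ l ≤ Real.exp (-(α l / (d:ℝ))) := by
    intro l
    have h1 := (hα l).1
    have h2 := (hα l).2
    have h3 : ((α l) ^ 2 - 2 * α l) / (d:ℝ) ≤ (-(α l)) / (d:ℝ) := by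
      apply div_le_div_of_nonneg_right ?_ hdpos.le
      nlinarith
    have h4 := Real.add_one_le_exp (-(α l / (d:ℝ)))
    have h5 : (-(α l)) / (d:ℝ) = -(α l / (d:ℝ)) := by ring
    simp only [hρdef]
    linarith
  -- product over Ico is nonneg and ≤ 1
  have hprod_nonneg : ∀ a b : ℕ, 0 ≤ ∏ l ∈ Finset.Ico a b, ρ l := fun a b =>
    Finset.prod_nonneg fun l _ => hρnonneg l
  have hprod_le1 : ∀ a b : ℕ, ∏ l ∈ Finset.Ico a b, ρ l ≤ 1 := fun a b =>
    Finset.prod_le_one (fun l _ => hρnonneg l) (fun l _ => hρle1 l)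
  -- αₖ² → 0
  have hα2_zero : Filter.Tendsto (fun k => (α k) ^ 2) Filter.atTop (nhds 0) :=
    hsq.tendsto_atTop_zero
  -- the sum part tends to 0
  set S : ℕ → ℝ := fun k => ∑ j ∈ Finset.range k, (α j) ^ 2
      * ∏ l ∈ Finset.Ico (j + 1) (k + 1), ρ l with hSdef
  have hSnonneg : ∀ k, 0 ≤ S k := by
    intro k
    apply Finset.sum_nonneg
    intro j _
    exact mul_nonneg (sq_nonneg _) (hprod_nonneg _ _)
  have hS_zero : Filter.Tendsto S Filter.atTop (nhds 0) := by
    rw [Metric.tendsto_atTop]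
    intro ε hε
    set t : ℝ := ∑' k, (α k) ^ 2 with ht
    have hpartial : Filter.Tendsto (fun n => ∑ j ∈ Finset.range n, (α j) ^ 2)
        Filter.atTop (nhds t) := hsq.hasSum.tendsto_sum_nat
    -- choose N with t - partial sum < ε/2
    have h1 : Filter.Tendsto (fun n => t - ∑ j ∈ Finset.range n, (α j) ^ 2)
        Filter.atTop (nhds 0) := by
      have := (tendsto_const_nhds (x := t) (f := Filter.atTop (α := ℕ))).sub hpartial
      simpa using this
    have h2 : ∀ᶠ n in Filter.atTop,
        t - ∑ j ∈ Finset.range n, (α j) ^ 2 < ε / 2 := by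
      have := h1.eventually (eventually_lt_nhds (by linarith : (0:ℝ) < ε / 2))
      exact this
    obtain ⟨N, hN⟩ := h2.exists
    set C : ℝ := ∑ j ∈ Finset.range N, (α j) ^ 2 with hC
    -- the tail product from N tends to 0
    have hP_zero : Filter.Tendsto (fun k => ∏ l ∈ Finset.Ico N (k + 1), ρ l)
        Filter.atTop (nhds 0) := by
      have hub : ∀ k, ∏ l ∈ Finset.Ico N (k + 1), ρ l
          ≤ Real.exp (-((∑ l ∈ Finset.Ico N (k + 1), α l) / (d:ℝ))) := by
        intro k
        calc ∏ l ∈ Finset.Ico N (k + 1), ρ l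
            ≤ ∏ l ∈ Finset.Ico N (k + 1), Real.exp (-(α l / (d:ℝ))) :=
              Finset.prod_le_prod (fun l _ => hρnonneg l) (fun l _ => hρexp l)
          _ = Real.exp (∑ l ∈ Finset.Ico N (k + 1), -(α l / (d:ℝ))) :=
              (Real.exp_sum _ _).symm
          _ = Real.exp (-((∑ l ∈ Finset.Ico N (k + 1), α l) / (d:ℝ))) := by
              congr 1
              rw [Finset.sum_div, ← Finset.sum_neg_distrib]
      have hsum_top : Filter.Tendsto (fun k => ∑ l ∈ Finset.Ico N (k + 1), α l)
          Filter.atTop Filter.atTop := by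
        have hkey : ∀ k, N ≤ k + 1 → ∑ l ∈ Finset.Ico N (k + 1), α l
            = ∑ l ∈ Finset.range (k + 1), α l - ∑ l ∈ Finset.range N, α l := by
          intro k hk
          rw [Finset.sum_Ico_eq_sub _ hk]
        have h3 : Filter.Tendsto (fun k => ∑ l ∈ Finset.range (k + 1), α l
            - ∑ l ∈ Finset.range N, α l) Filter.atTop Filter.atTop := by
          apply Filter.tendsto_atTop_add_const_right
          exact hdiv.comp (tendsto_add_atTop_nat 1)
        apply h3.congr'
        filter_upwards [Filter.eventually_ge_atTop N] with k hk
        exact (hkey k (le_trans hk (Nat.le_succ k))).symm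
      have hexp_zero : Filter.Tendsto
          (fun k => Real.exp (-((∑ l ∈ Finset.Ico N (k + 1), α l) / (d:ℝ))))
          Filter.atTop (nhds 0) := by
        apply Real.tendsto_exp_atBot.comp
        apply Filter.tendsto_neg_atTop_atBot.comp
        exact hsum_top.atTop_div_const hdpos
      exact squeeze_zero (fun k => hprod_nonneg _ _) hub hexp_zero
    -- choose K such that C * P k < ε / 2 for k ≥ K
    have hCP : Filter.Tendsto (fun k => C * ∏ l ∈ Finset.Ico N (k + 1), ρ l)
        Filter.atTop (nhds 0) := by
      simpa using hP_zero.const_mul C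
    have h4 : ∀ᶠ k in Filter.atTop,
        C * ∏ l ∈ Finset.Ico N (k + 1), ρ l < ε / 2 := by
      have habs := hCP.eventually (eventually_lt_nhds (by linarith : (0:ℝ) < ε / 2))
      exact habs
    obtain ⟨K₀, hK₀⟩ := h4.exists_forall_of_atTop
    refine ⟨max N K₀, fun k hk => ?_⟩
    have hkN : N ≤ k := le_trans (le_max_left _ _) hk
    have hkK₀ : K₀ ≤ k := le_trans (le_max_right _ _) hk
    rw [Real.dist_eq, sub_zero, abs_of_nonneg (hSnonneg k)]
    -- split S k at N
    have hsplit : S k = (∑ j ∈ Finset.range N, (α j) ^ 2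
          * ∏ l ∈ Finset.Ico (j + 1) (k + 1), ρ l)
        + ∑ j ∈ Finset.Ico N k, (α j) ^ 2
          * ∏ l ∈ Finset.Ico (j + 1) (k + 1), ρ l := by
      simp only [hSdef, Finset.range_eq_Ico]
      rw [← Finset.sum_Ico_consecutive _ (Nat.zero_le N) hkN]
    rw [hsplit]
    have hfirst : ∑ j ∈ Finset.range N, (α j) ^ 2
          * ∏ l ∈ Finset.Ico (j + 1) (k + 1), ρ l
        ≤ C * ∏ l ∈ Finset.Ico N (k + 1), ρ l := by
      rw [hC, Finset.sum_mul]
      apply Finset.sum_le_sum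
      intro j hj
      have hjN : j + 1 ≤ N := Finset.mem_range.mp hj
      have hNk1 : N ≤ k + 1 := le_trans hkN (Nat.le_succ k)
      have hps : ∏ l ∈ Finset.Ico (j + 1) (k + 1), ρ l
          = (∏ l ∈ Finset.Ico (j + 1) N, ρ l) * ∏ l ∈ Finset.Ico N (k + 1), ρ l :=
        (Finset.prod_Ico_consecutive _ hjN hNk1).symm
      rw [hps, ← mul_assoc]
      apply mul_le_mul_of_nonneg_right _ (hprod_nonneg _ _)
      calc (α j) ^ 2 * ∏ l ∈ Finset.Ico (j + 1) N, ρ l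
          ≤ (α j) ^ 2 * 1 :=
            mul_le_mul_of_nonneg_left (hprod_le1 _ _) (sq_nonneg _)
        _ = (α j) ^ 2 := mul_one _
    have hsecond : ∑ j ∈ Finset.Ico N k, (α j) ^ 2
          * ∏ l ∈ Finset.Ico (j + 1) (k + 1), ρ l
        ≤ t - ∑ j ∈ Finset.range N, (α j) ^ 2 := by
      calc ∑ j ∈ Finset.Ico N k, (α j) ^ 2
            * ∏ l ∈ Finset.Ico (j + 1) (k + 1), ρ l
          ≤ ∑ j ∈ Finset.Ico N k, (α j) ^ 2 := by
            apply Finset.sum_le_sum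
            intro j _
            calc (α j) ^ 2 * ∏ l ∈ Finset.Ico (j + 1) (k + 1), ρ l
                ≤ (α j) ^ 2 * 1 :=
                  mul_le_mul_of_nonneg_left (hprod_le1 _ _) (sq_nonneg _)
              _ = (α j) ^ 2 := mul_one _
        _ = ∑ j ∈ Finset.range k, (α j) ^ 2
            - ∑ j ∈ Finset.range N, (α j) ^ 2 := Finset.sum_Ico_eq_sub _ hkN
        _ ≤ t - ∑ j ∈ Finset.range N, (α j) ^ 2 := by
            have : ∑ j ∈ Finset.range k, (α j) ^ 2 ≤ t :=
              Summable.sum_le_tsum _ (fun i _ => sq_nonneg _) hsq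
            linarith
    have hCPk := hK₀ k hkK₀
    linarith
  -- combine
  have : Filter.Tendsto (fun k => (α k) ^ 2 + S k) Filter.atTop (nhds 0) := by
    have := hα2_zero.add hS_zero
    simpa using this
  apply this.congr'
  filter_upwards with k
  exact (hA k).symm
end

section
/- Under the general strongly convex setting, SGD satisfies E[||θ_{k+1} - β*||₂²] ≤ ||θ_0 - β*||₂² ∏_{j=0}^{k}(1 - 2α_j σ + α_j² L²) + C·A_k, where A_k = α_k² + ∑_{j=0}^{k-1} α_j² ∏_{l=j+1}^{k}(1 - 2α_l σ + α_l² L²). -/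
open MeasureTheory Filter Finset
open scoped ENNReal RealInnerProductSpace

theorem condexp_clm_comm {Ω : Type*} {m m0 : MeasurableSpace Ω} (hm : m ≤ m0)
    {μ : Measure Ω} [IsFiniteMeasure μ]
    {E E' : Type*} [NormedAddCommGroup E] [NormedSpace ℝ E] [CompleteSpace E]
    [NormedAddCommGroup E'] [NormedSpace ℝ E'] [CompleteSpace E']
    (T : E →L[ℝ] E') {f : Ω → E} (hf : Integrable f μ) :
    μ[fun ω => T (f ω)|m] =ᵐ[μ] fun ω => T ((μ[f|m]) ω) := by
  refine (ae_eq_condExp_of_forall_setIntegral_eq hm (T.integrable_comp hf) ?_ ?_ ?_).symm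
  · intro s _ _
    exact (T.integrable_comp integrable_condExp).integrableOn
  · intro s hs hμs
    rw [T.integral_comp_comm integrable_condExp.integrableOn,
      T.integral_comp_comm hf.integrableOn, setIntegral_condExp hm hf hs]
  · exact (T.continuous.comp_stronglyMeasurable stronglyMeasurable_condExp).aestronglyMeasurable

theorem euclid_abs_coord_le {d : ℕ} (x : EuclideanSpace ℝ (Fin d)) (i : Fin d) :
    |x i| ≤ ‖x‖ := by
  rw [EuclideanSpace.norm_eq]
  have h1 : |x i| = Real.sqrt (‖x i‖ ^ 2) := by
    rw [Real.norm_eq_abs, Real.sqrt_sq (abs_nonneg _)]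
  rw [h1]
  exact Real.sqrt_le_sqrt (Finset.single_le_sum (f := fun j => ‖x j‖ ^ 2) (fun j _ => sq_nonneg _) (Finset.mem_univ i))

set_option maxHeartbeats 1000000 in
theorem sgd_onestep
    {Ω : Type*} [m : MeasurableSpace Ω] (μ : Measure Ω) [IsProbabilityMeasure μ]
    (d : ℕ)
    (F : ℕ → MeasurableSpace Ω) (hF : ∀ k, F k ≤ m)
    (σc L C : ℝ) (hσ : 0 < σc) (hL : 0 ≤ L) (hC : 0 ≤ C)
    (α : ℕ → ℝ) (hα : ∀ k, 0 ≤ α k)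
    (g : EuclideanSpace ℝ (Fin d) → EuclideanSpace ℝ (Fin d))
    (hsc : ∀ x y, σc * ‖x - y‖ ^ 2 ≤ ⟪g x - g y, x - y⟫)
    (hLip : ∀ x y, ‖g x - g y‖ ≤ L * ‖x - y‖)
    (βstar : EuclideanSpace ℝ (Fin d)) (hg0 : g βstar = 0)
    (θ G : ℕ → Ω → EuclideanSpace ℝ (Fin d))
    (hrec : ∀ k ω, θ (k + 1) ω = θ k ω - α k • G (k + 1) ω)
    (hθmeas : ∀ k, Measurable[F k] (θ k))
    (hθ2 : ∀ k, MemLp (θ k) 2 μ) (hG2 : ∀ k, MemLp (G k) 2 μ)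
    (hmean : ∀ k, μ[G (k + 1) | F k] =ᵐ[μ] fun ω => g (θ k ω))
    (hnoise : ∀ k, ∀ᵐ ω ∂μ,
      (μ[fun ωp => ‖G (k + 1) ωp - g (θ k ωp)‖ ^ 2 | F k]) ω ≤ C)
    (n : ℕ) :
    ∫ ω, ‖θ (n + 1) ω - βstar‖ ^ 2 ∂μ
      ≤ (1 - 2 * α n * σc + (α n) ^ 2 * L ^ 2) * ∫ ω, ‖θ n ω - βstar‖ ^ 2 ∂μ
        + C * (α n) ^ 2 := by
  set gθ : Ω → EuclideanSpace ℝ (Fin d) := fun ω => g (θ n ω) with hgθdef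
  set Y : Ω → EuclideanSpace ℝ (Fin d) := fun ω => G (n + 1) ω - gθ ω with hYdef
  set D : Ω → EuclideanSpace ℝ (Fin d) := fun ω => θ n ω - βstar with hDdef
  set Z : Ω → EuclideanSpace ℝ (Fin d) := fun ω => D ω - α n • gθ ω with hZdef
  have hLipW : LipschitzWith L.toNNReal g := by
    refine LipschitzWith.of_dist_le_mul fun x y => ?_
    rw [dist_eq_norm, dist_eq_norm, Real.coe_toNNReal L hL]
    exact hLip x y
  have hgcont : Continuous g := hLipW.continuous
  have hθm : Measurable (θ n) := (hθmeas n).mono (hF n) le_rfl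
  have hgθmF : Measurable[F n] gθ := hgcont.measurable.comp (hθmeas n)
  have hD2 : MemLp D 2 μ := (hθ2 n).sub (memLp_const βstar)
  have hgθ2 : MemLp gθ 2 μ := by
    refine MemLp.of_le (hD2.const_smul L) (hgcont.comp_aestronglyMeasurable hθm.aestronglyMeasurable) ?_
    filter_upwards with ω
    have h := hLip (θ n ω) βstar
    rw [hg0, sub_zero] at h
    calc ‖gθ ω‖ ≤ L * ‖θ n ω - βstar‖ := h
      _ = ‖L • D ω‖ := by rw [norm_smul, Real.norm_eq_abs, abs_of_nonneg hL]
  have hY2 : MemLp Y 2 μ := (hG2 (n + 1)).sub hgθ2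
  have hZ2 : MemLp Z 2 μ := hD2.sub (hgθ2.const_smul (α n))
  have hYsq : Integrable (fun ω => ‖Y ω‖ ^ 2) μ := hY2.norm.integrable_sq
  have hZsq : Integrable (fun ω => ‖Z ω‖ ^ 2) μ := hZ2.norm.integrable_sq
  have hDsq : Integrable (fun ω => ‖D ω‖ ^ 2) μ := hD2.norm.integrable_sq
  have hdom : Integrable (fun ω => (‖Z ω‖ ^ 2 + ‖Y ω‖ ^ 2) / 2) μ :=
    (hZsq.add hYsq).div_const 2
  have hZY : Integrable (fun ω => ⟪Z ω, Y ω⟫) μ := by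
    refine Integrable.mono' hdom
      (hZ2.aestronglyMeasurable.inner hY2.aestronglyMeasurable) ?_
    filter_upwards with ω
    calc ‖⟪Z ω, Y ω⟫‖ ≤ ‖Z ω‖ * ‖Y ω‖ := norm_inner_le_norm _ _
      _ ≤ (‖Z ω‖ ^ 2 + ‖Y ω‖ ^ 2) / 2 := by nlinarith [sq_nonneg (‖Z ω‖ - ‖Y ω‖)]
  have hG1 : Integrable (G (n + 1)) μ := (hG2 (n + 1)).integrable one_le_two
  have hgθ1 : Integrable gθ μ := hgθ2.integrable one_le_two
  have hY1 : Integrable Y μ := hG1.sub hgθ1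
  have hmeanY : μ[Y|F n] =ᵐ[μ] fun _ => (0 : EuclideanSpace ℝ (Fin d)) := by
    have h1 := condExp_sub (m := F n) (μ := μ) hG1 hgθ1
    have h2 : μ[gθ|F n] = gθ :=
      condExp_of_stronglyMeasurable (hF n) hgθmF.stronglyMeasurable hgθ1
    filter_upwards [h1, hmean n] with ω e1 e2
    have : (μ[Y|F n]) ω = (μ[G (n + 1)|F n]) ω - (μ[gθ|F n]) ω := by
      exact e1
    rw [this, e2, h2]
    simp [gθ]
  have hZm : Measurable[F n] Z :=
    ((hθmeas n).sub measurable_const).sub (hgθmF.const_smul (α n))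
  -- coordinates
  have hYi0 : ∀ i : Fin d, μ[fun ω => Y ω i|F n] =ᵐ[μ] fun _ => (0 : ℝ) := by
    intro i
    have hT := condexp_clm_comm (hF n) (EuclideanSpace.proj (𝕜 := ℝ) i) hY1
    refine EventuallyEq.trans ?_ (hT.trans ?_)
    · exact EventuallyEq.rfl
    · filter_upwards [hmeanY] with ω hω
      rw [hω]; simp
  have hYi1 : ∀ i : Fin d, Integrable (fun ω => Y ω i) μ := fun i =>
    (EuclideanSpace.proj (𝕜 := ℝ) i).integrable_comp hY1
  have hZiYi : ∀ i : Fin d, Integrable (fun ω => Z ω i * Y ω i) μ := by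
    intro i
    refine Integrable.mono' hdom ?_ ?_
    · exact ((((EuclideanSpace.proj (𝕜 := ℝ) i).continuous.measurable.comp
        (hZm.mono (hF n) le_rfl)).aestronglyMeasurable)).mul
        (((EuclideanSpace.proj (𝕜 := ℝ) i).continuous.comp_aestronglyMeasurable
          hY1.aestronglyMeasurable))
    · filter_upwards with ω
      have h1 : |Z ω i| ≤ ‖Z ω‖ := euclid_abs_coord_le _ i
      have h2 : |Y ω i| ≤ ‖Y ω‖ := euclid_abs_coord_le _ i
      have h3 : ‖Z ω i * Y ω i‖ = |Z ω i| * |Y ω i| := by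
        rw [Real.norm_eq_abs, abs_mul]
      rw [h3]
      nlinarith [abs_nonneg (Z ω i), abs_nonneg (Y ω i), norm_nonneg (Z ω), norm_nonneg (Y ω),
        sq_nonneg (‖Z ω‖ - ‖Y ω‖)]
  have hZism : ∀ i : Fin d, StronglyMeasurable[F n] (fun ω => Z ω i) := fun i =>
    (((EuclideanSpace.proj (𝕜 := ℝ) i).continuous.measurable.comp hZm)).stronglyMeasurable
  have hcross_i : ∀ i : Fin d, ∫ ω, Z ω i * Y ω i ∂μ = 0 := by
    intro i
    have hpull : μ[(fun ω => Z ω i) * fun ω => Y ω i|F n]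
        =ᵐ[μ] (fun ω => Z ω i) * μ[fun ω => Y ω i|F n] :=
      condExp_mul_of_stronglyMeasurable_left (hZism i) (hZiYi i) (hYi1 i)
    calc ∫ ω, Z ω i * Y ω i ∂μ
        = ∫ ω, (μ[(fun ω => Z ω i) * fun ω => Y ω i|F n]) ω ∂μ :=
          (integral_condExp (hF n)).symm
      _ = ∫ ω, Z ω i * (μ[fun ω => Y ω i|F n]) ω ∂μ := by
          refine integral_congr_ae ?_
          filter_upwards [hpull] with ω hω
          simpa using hω
      _ = ∫ ω, (0 : ℝ) ∂μ := by
          refine integral_congr_ae ?_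
          filter_upwards [hYi0 i] with ω hω
          rw [hω, mul_zero]
      _ = 0 := integral_zero _ _
  have hinner_eq : ∀ ω, ⟪Z ω, Y ω⟫ = ∑ i, Z ω i * Y ω i := by
    intro ω
    simp [PiLp.inner_apply, RCLike.inner_apply, mul_comm]
  have hcross : ∫ ω, ⟪Z ω, Y ω⟫ ∂μ = 0 := by
    simp_rw [hinner_eq]
    rw [integral_finset_sum _ (fun i _ => hZiYi i)]
    simp [hcross_i]
  -- noise bound
  have hnoiseE : ∫ ω, ‖Y ω‖ ^ 2 ∂μ ≤ C := by
    have h0 : ∫ ω, ‖Y ω‖ ^ 2 ∂μ = ∫ ω, (μ[fun ω => ‖Y ω‖ ^ 2|F n]) ω ∂μ :=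
      (integral_condExp (hF n)).symm
    rw [h0]
    calc ∫ ω, (μ[fun ω => ‖Y ω‖ ^ 2|F n]) ω ∂μ ≤ ∫ _, C ∂μ :=
          integral_mono_ae integrable_condExp (integrable_const C) (hnoise n)
      _ = C := by simp
  -- pointwise expansion
  have hexp : ∀ ω, ‖θ (n + 1) ω - βstar‖ ^ 2
      = ‖Z ω‖ ^ 2 - 2 * α n * ⟪Z ω, Y ω⟫ + (α n) ^ 2 * ‖Y ω‖ ^ 2 := by
    intro ω
    have h1 : θ (n + 1) ω - βstar = Z ω - α n • Y ω := by
      rw [hrec n ω]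
      simp only [hZdef, hYdef, hDdef, smul_sub]
      abel
    rw [h1, norm_sub_sq_real, inner_smul_right, norm_smul, mul_pow, Real.norm_eq_abs, sq_abs]
    ring
  -- pointwise bound on Z
  have hZbound : ∀ ω, ‖Z ω‖ ^ 2
      ≤ (1 - 2 * α n * σc + (α n) ^ 2 * L ^ 2) * ‖D ω‖ ^ 2 := by
    intro ω
    have h1 : σc * ‖D ω‖ ^ 2 ≤ ⟪gθ ω, D ω⟫ := by
      simpa [hg0, gθ, D] using hsc (θ n ω) βstar
    have h2 : ‖gθ ω‖ ≤ L * ‖D ω‖ := by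
      simpa [hg0, gθ, D] using hLip (θ n ω) βstar
    have h2' : ‖gθ ω‖ ^ 2 ≤ L ^ 2 * ‖D ω‖ ^ 2 := by
      nlinarith [norm_nonneg (gθ ω), norm_nonneg (D ω)]
    have hid : ‖Z ω‖ ^ 2
        = ‖D ω‖ ^ 2 - 2 * α n * ⟪D ω, gθ ω⟫ + (α n) ^ 2 * ‖gθ ω‖ ^ 2 := by
      rw [hZdef]
      rw [norm_sub_sq_real, inner_smul_right, norm_smul, mul_pow, Real.norm_eq_abs, sq_abs]
      ring
    have hcomm : ⟪D ω, gθ ω⟫ = ⟪gθ ω, D ω⟫ := real_inner_comm _ _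
    rw [hid, hcomm]
    have hb1 : 2 * α n * (σc * ‖D ω‖ ^ 2) ≤ 2 * α n * ⟪gθ ω, D ω⟫ :=
      mul_le_mul_of_nonneg_left h1 (by nlinarith [hα n])
    have hb2 : (α n) ^ 2 * ‖gθ ω‖ ^ 2 ≤ (α n) ^ 2 * (L ^ 2 * ‖D ω‖ ^ 2) :=
      mul_le_mul_of_nonneg_left h2' (sq_nonneg _)
    nlinarith [hb1, hb2]
  -- integrate
  have hsplit : ∫ ω, ‖θ (n + 1) ω - βstar‖ ^ 2 ∂μ
      = ∫ ω, ‖Z ω‖ ^ 2 ∂μ - 2 * α n * ∫ ω, ⟪Z ω, Y ω⟫ ∂μ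
        + (α n) ^ 2 * ∫ ω, ‖Y ω‖ ^ 2 ∂μ := by
    have i3 : Integrable (fun ω => 2 * α n * ⟪Z ω, Y ω⟫) μ := hZY.const_mul _
    have i1 : Integrable (fun ω => ‖Z ω‖ ^ 2 - 2 * α n * ⟪Z ω, Y ω⟫) μ := hZsq.sub i3
    have i2 : Integrable (fun ω => (α n) ^ 2 * ‖Y ω‖ ^ 2) μ := hYsq.const_mul _
    simp_rw [hexp]
    rw [integral_add i1 i2, integral_sub hZsq i3, integral_const_mul, integral_const_mul]
  have hZint : ∫ ω, ‖Z ω‖ ^ 2 ∂μ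
      ≤ (1 - 2 * α n * σc + (α n) ^ 2 * L ^ 2) * ∫ ω, ‖D ω‖ ^ 2 ∂μ := by
    calc ∫ ω, ‖Z ω‖ ^ 2 ∂μ
        ≤ ∫ ω, (1 - 2 * α n * σc + (α n) ^ 2 * L ^ 2) * ‖D ω‖ ^ 2 ∂μ :=
          integral_mono hZsq (hDsq.const_mul _) hZbound
      _ = _ := integral_const_mul _ _
  rw [hsplit, hcross]
  have : (α n) ^ 2 * ∫ ω, ‖Y ω‖ ^ 2 ∂μ ≤ (α n) ^ 2 * C :=
    mul_le_mul_of_nonneg_left hnoiseE (sq_nonneg _)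
  simp only [mul_zero, sub_zero]
  have hDeq : ∫ ω, ‖D ω‖ ^ 2 ∂μ = ∫ ω, ‖θ n ω - βstar‖ ^ 2 ∂μ := rfl
  nlinarith [hZint]

/-- Under the general strongly convex setting, SGD satisfies
`E[‖θ_{k+1} - β*‖²] ≤ ‖θ₀ - β*‖² ∏_{j=0}^{k}(1 - 2α_j σ + α_j² L²) + C·A_k`,
where `A_k = α_k² + ∑_{j=0}^{k-1} α_j² ∏_{l=j+1}^{k}(1 - 2α_l σ + α_l² L²)`. -/
theorem sgd_general_expected_error_bound
    {Ω : Type*} [m : MeasurableSpace Ω] (μ : Measure Ω) [IsProbabilityMeasure μ]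
    (d : ℕ)
    (F : ℕ → MeasurableSpace Ω) (hF : ∀ k, F k ≤ m)
    (σc L C : ℝ) (hσ : 0 < σc) (hL : 0 ≤ L) (hC : 0 ≤ C)
    (α : ℕ → ℝ) (hα : ∀ k, 0 ≤ α k)
    (g : EuclideanSpace ℝ (Fin d) → EuclideanSpace ℝ (Fin d))
    (hsc : ∀ x y, σc * ‖x - y‖ ^ 2 ≤ ⟪g x - g y, x - y⟫)
    (hLip : ∀ x y, ‖g x - g y‖ ≤ L * ‖x - y‖)
    (βstar : EuclideanSpace ℝ (Fin d)) (hg0 : g βstar = 0)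
    (θinit : EuclideanSpace ℝ (Fin d))
    (θ G : ℕ → Ω → EuclideanSpace ℝ (Fin d))
    (hθ0 : ∀ ω, θ 0 ω = θinit)
    (hrec : ∀ k ω, θ (k + 1) ω = θ k ω - α k • G (k + 1) ω)
    (hθmeas : ∀ k, Measurable[F k] (θ k))
    (hθ2 : ∀ k, MemLp (θ k) 2 μ) (hG2 : ∀ k, MemLp (G k) 2 μ)
    (hmean : ∀ k, μ[G (k + 1) | F k] =ᵐ[μ] fun ω => g (θ k ω))
    (hnoise : ∀ k, ∀ᵐ ω ∂μ,
      (μ[fun ωp => ‖G (k + 1) ωp - g (θ k ωp)‖ ^ 2 | F k]) ω ≤ C)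
    (hfac : ∀ k, 0 ≤ 1 - 2 * α k * σc + (α k) ^ 2 * L ^ 2)
    (k : ℕ) :
    ∫ ω, ‖θ (k + 1) ω - βstar‖ ^ 2 ∂μ
      ≤ ‖θinit - βstar‖ ^ 2
          * ∏ j ∈ Finset.range (k + 1), (1 - 2 * α j * σc + (α j) ^ 2 * L ^ 2)
        + C * ((α k) ^ 2
            + ∑ j ∈ Finset.range k, (α j) ^ 2
                * ∏ l ∈ Finset.Ico (j + 1) (k + 1),
                    (1 - 2 * α l * σc + (α l) ^ 2 * L ^ 2)) := by
  have key : ∀ n, ∫ ω, ‖θ (n + 1) ω - βstar‖ ^ 2 ∂μ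
      ≤ (1 - 2 * α n * σc + (α n) ^ 2 * L ^ 2) * ∫ ω, ‖θ n ω - βstar‖ ^ 2 ∂μ
        + C * (α n) ^ 2 := fun n =>
    sgd_onestep μ d F hF σc L C hσ hL hC α hα g hsc hLip βstar hg0 θ G hrec hθmeas hθ2 hG2
      hmean hnoise n
  have h0 : ∫ ω, ‖θ 0 ω - βstar‖ ^ 2 ∂μ = ‖θinit - βstar‖ ^ 2 := by
    simp_rw [hθ0]; simp
  induction k with
  | zero =>
    have := key 0
    rw [h0] at this
    simpa [mul_comm] using this
  | succ k ih =>
    have hq := hfac (k + 1)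
    have step := key (k + 1)
    have h2 : (1 - 2 * α (k + 1) * σc + (α (k + 1)) ^ 2 * L ^ 2)
          * ∫ ω, ‖θ (k + 1) ω - βstar‖ ^ 2 ∂μ + C * (α (k + 1)) ^ 2
        ≤ (1 - 2 * α (k + 1) * σc + (α (k + 1)) ^ 2 * L ^ 2)
          * (‖θinit - βstar‖ ^ 2
              * ∏ j ∈ Finset.range (k + 1), (1 - 2 * α j * σc + (α j) ^ 2 * L ^ 2)
            + C * ((α k) ^ 2
                + ∑ j ∈ Finset.range k, (α j) ^ 2
                    * ∏ l ∈ Finset.Ico (j + 1) (k + 1),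
                        (1 - 2 * α l * σc + (α l) ^ 2 * L ^ 2)))
          + C * (α (k + 1)) ^ 2 :=
      add_le_add_left (mul_le_mul_of_nonneg_left ih hq) _
    refine le_trans step (le_trans h2 (le_of_eq ?_))
    have e2 : ∑ j ∈ Finset.range (k + 1), (α j) ^ 2
          * ∏ l ∈ Finset.Ico (j + 1) (k + 1 + 1), (1 - 2 * α l * σc + (α l) ^ 2 * L ^ 2)
        = (∑ j ∈ Finset.range (k + 1), (α j) ^ 2
            * ∏ l ∈ Finset.Ico (j + 1) (k + 1), (1 - 2 * α l * σc + (α l) ^ 2 * L ^ 2))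
          * (1 - 2 * α (k + 1) * σc + (α (k + 1)) ^ 2 * L ^ 2) := by
      rw [Finset.sum_mul]
      refine Finset.sum_congr rfl fun j hj => ?_
      rw [Finset.prod_Ico_succ_top (Nat.succ_le_succ (Nat.lt_succ_iff.mp (Finset.mem_range.mp hj)))]
      ring
    have e3 : ∑ j ∈ Finset.range (k + 1), (α j) ^ 2
          * ∏ l ∈ Finset.Ico (j + 1) (k + 1), (1 - 2 * α l * σc + (α l) ^ 2 * L ^ 2)
        = (∑ j ∈ Finset.range k, (α j) ^ 2
            * ∏ l ∈ Finset.Ico (j + 1) (k + 1), (1 - 2 * α l * σc + (α l) ^ 2 * L ^ 2))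
          + (α k) ^ 2 := by
      rw [Finset.sum_range_succ]
      simp [Finset.Ico_self]
    rw [Finset.prod_range_succ (fun l => 1 - 2 * α l * σc + (α l) ^ 2 * L ^ 2) (k + 1), e2, e3]
    ring
end

section
/- For SGD on a σ-strongly convex risk with L-Lipschitz gradient and noise bound C, for any δ > 0: P(||θ_k - β*||₂ ≤ δ) ≥ 1 - [||θ_0 - β*||₂² ∏_{j=0}^{k-1}(1 - 2α_j σ + α_j² L²) + C·A_{k-1}]/δ². -/
open MeasureTheory Filter Finset
open scoped ENNReal RealInnerProductSpace

lemma sgd_orth_aux {Ω : Type*} {mF : MeasurableSpace Ω} [m : MeasurableSpace Ω]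
    {μ : Measure Ω} [IsProbabilityMeasure μ]
    {E : Type*} [NormedAddCommGroup E] [InnerProductSpace ℝ E] [CompleteSpace E]
    (hm : mF ≤ m)
    {v w : Ω → E} (hv : AEStronglyMeasurable[mF] v μ)
    (hv2 : MemLp v 2 μ) (hw2 : MemLp w 2 μ)
    (hw : μ[w | mF] =ᵐ[μ] 0) :
    ∫ ω, ⟪v ω, w ω⟫ ∂μ = 0 := by
  set V := hv2.toLp v with hV
  set W := hw2.toLp w with hW
  have hVae : (V : Ω → E) =ᵐ[μ] v := hv2.coeFn_toLp
  have hWae : (W : Ω → E) =ᵐ[μ] w := hw2.coeFn_toLp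
  have hcond0 : ((condExpL2 E ℝ hm W : Lp E 2 μ) : Ω → E) =ᵐ[μ] 0 := by
    have h1 : ((condExpL2 E ℝ hm W : Lp E 2 μ) : Ω → E) =ᵐ[μ] μ[w|mF] := by
      refine ae_eq_condExp_of_forall_setIntegral_eq hm (hw2.integrable one_le_two)
        (fun s hs hμs => integrableOn_Lp_of_measure_ne_top _ fact_one_le_two_ennreal.elim hμs.ne)
        (fun s hs hμs => ?_) ?_
      · rw [integral_condExpL2_eq hm W hs hμs.ne]
        exact integral_congr_ae (ae_restrict_of_ae hWae)
      · exact mem_lpMeas_iff_aestronglyMeasurable.mp (condExpL2 E ℝ hm W).2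
    exact h1.trans hw
  have hVmeas : AEStronglyMeasurable[mF] (V : Ω → E) μ := hv.congr hVae.symm
  have hinner : (inner ℝ W V : ℝ) = inner ℝ ((condExpL2 E ℝ hm W : Lp E 2 μ)) V :=
    (inner_condExpL2_eq_inner_fun hm W V hVmeas).symm
  have h2 : (inner ℝ ((condExpL2 E ℝ hm W : Lp E 2 μ)) V : ℝ) = 0 := by
    rw [L2.inner_def]
    rw [integral_congr_ae (g := fun _ => (0:ℝ)) ?_]
    · simp
    · filter_upwards [hcond0] with ω hω
      simp [hω]
  have h3 : ∫ ω, ⟪v ω, w ω⟫ ∂μ = (inner ℝ W V : ℝ) := by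
    rw [L2.inner_def]
    refine integral_congr_ae ?_
    filter_upwards [hVae, hWae] with ω h1 h2
    rw [h1, h2, real_inner_comm]
  rw [h3, hinner, h2]

lemma sgd_step_aux {Ω : Type*} {mF : MeasurableSpace Ω} [m : MeasurableSpace Ω]
    {μ : Measure Ω} [IsProbabilityMeasure μ] {d : ℕ}
    (hm : mF ≤ m)
    (σc L C a : ℝ) (hL : 0 ≤ L) (ha : 0 ≤ a)
    (g : EuclideanSpace ℝ (Fin d) → EuclideanSpace ℝ (Fin d))
    (hsc : ∀ x y, σc * ‖x - y‖ ^ 2 ≤ ⟪g x - g y, x - y⟫)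
    (hLip : ∀ x y, ‖g x - g y‖ ≤ L * ‖x - y‖)
    (βstar : EuclideanSpace ℝ (Fin d)) (hg0 : g βstar = 0)
    (X Gn : Ω → EuclideanSpace ℝ (Fin d))
    (hXmeas : Measurable[mF] X)
    (hX2 : MemLp X 2 μ) (hG2 : MemLp Gn 2 μ)
    (hmean : μ[Gn | mF] =ᵐ[μ] fun ω => g (X ω))
    (hnoise : ∀ᵐ ω ∂μ, (μ[fun ωp => ‖Gn ωp - g (X ωp)‖ ^ 2 | mF]) ω ≤ C) :
    ∫ ω, ‖(X ω - a • Gn ω) - βstar‖ ^ 2 ∂μ ≤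
      (1 - 2 * a * σc + a ^ 2 * L ^ 2) * ∫ ω, ‖X ω - βstar‖ ^ 2 ∂μ + C * a ^ 2 := by
  have hgcont : Continuous g := by
    refine (LipschitzWith.of_dist_le_mul (K := L.toNNReal) (f := g) ?_).continuous
    intro x y
    rw [dist_eq_norm, dist_eq_norm, Real.coe_toNNReal L hL]
    exact hLip x y
  set gX : Ω → EuclideanSpace ℝ (Fin d) := fun ω => g (X ω) with hgX
  have hgXmeasF : Measurable[mF] gX := hgcont.measurable.comp hXmeas
  have hgXsm : StronglyMeasurable[mF] gX := hgXmeasF.stronglyMeasurable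
  have hXb2 : MemLp (fun ω => X ω - βstar) 2 μ := hX2.sub (memLp_const βstar)
  have hgXbound : ∀ ω, ‖gX ω‖ ≤ L * ‖X ω - βstar‖ := fun ω => by
    simpa [hg0] using hLip (X ω) βstar
  have hgX2 : MemLp gX 2 μ := by
    refine MemLp.of_le (hXb2.norm.const_mul L) ((hgXsm.mono hm).aestronglyMeasurable) ?_
    filter_upwards with ω
    calc ‖gX ω‖ ≤ L * ‖X ω - βstar‖ := hgXbound ω
    _ ≤ ‖L * ‖X ω - βstar‖‖ := le_abs_self _
  set v : Ω → EuclideanSpace ℝ (Fin d) := fun ω => (X ω - βstar) - a • gX ω with hv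
  set w : Ω → EuclideanSpace ℝ (Fin d) := fun ω => Gn ω - gX ω with hwdef
  have hv2 : MemLp v 2 μ := hXb2.sub (hgX2.const_smul a)
  have hw2 : MemLp w 2 μ := hG2.sub hgX2
  have hvmeasF : Measurable[mF] v := by
    exact ((hXmeas.sub_const βstar).sub (hgXmeasF.const_smul a))
  have hw0 : μ[w | mF] =ᵐ[μ] 0 := by
    have h1 : μ[w | mF] =ᵐ[μ] μ[Gn | mF] - μ[gX | mF] :=
      condExp_sub (μ := μ) (m := mF) (hG2.integrable one_le_two)
        (hgX2.integrable one_le_two)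
    have h2 : μ[gX | mF] = gX :=
      condExp_of_stronglyMeasurable hm hgXsm (hgX2.integrable one_le_two)
    filter_upwards [h1, hmean] with ω e1 e3
    simp only [Pi.sub_apply, h2] at e1
    simp [e1, e3]
  have horth : ∫ ω, ⟪v ω, w ω⟫ ∂μ = 0 :=
    sgd_orth_aux hm (hvmeasF.stronglyMeasurable.aestronglyMeasurable) hv2 hw2 hw0
  -- integrability
  have hIv : Integrable (fun ω => ‖v ω‖ ^ 2) μ := hv2.norm.integrable_sq
  have hIw : Integrable (fun ω => ‖w ω‖ ^ 2) μ := hw2.norm.integrable_sq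
  have hIX : Integrable (fun ω => ‖X ω - βstar‖ ^ 2) μ := hXb2.norm.integrable_sq
  have hIvw : Integrable (fun ω => ⟪v ω, w ω⟫) μ := by
    have := L2.integrable_inner (𝕜 := ℝ) (hv2.toLp v) (hw2.toLp w)
    refine this.congr ?_
    filter_upwards [hv2.coeFn_toLp, hw2.coeFn_toLp] with ω e1 e2
    rw [e1, e2]
  -- pointwise expansion
  have hexp : ∀ ω, ‖(X ω - a • Gn ω) - βstar‖ ^ 2
      = ‖v ω‖ ^ 2 - 2 * a * ⟪v ω, w ω⟫ + a ^ 2 * ‖w ω‖ ^ 2 := by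
    intro ω
    have h1 : (X ω - a • Gn ω) - βstar = v ω - a • w ω := by
      simp [hv, hwdef, smul_sub]; abel
    rw [h1, norm_sub_sq_real, real_inner_smul_right, norm_smul, Real.norm_eq_abs,
      abs_of_nonneg ha]
    ring
  -- split the integral
  have hsplit : ∫ ω, ‖(X ω - a • Gn ω) - βstar‖ ^ 2 ∂μ
      = (∫ ω, ‖v ω‖ ^ 2 ∂μ) - 2 * a * (∫ ω, ⟪v ω, w ω⟫ ∂μ)
        + a ^ 2 * (∫ ω, ‖w ω‖ ^ 2 ∂μ) := by
    have hIs : Integrable (fun ω => ‖v ω‖ ^ 2 - 2 * a * ⟪v ω, w ω⟫) μ :=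
      hIv.sub (hIvw.const_mul _)
    have hIc : Integrable (fun ω => a ^ 2 * ‖w ω‖ ^ 2) μ := hIw.const_mul _
    simp_rw [hexp]
    rw [integral_add hIs hIc, integral_sub hIv (hIvw.const_mul _), integral_const_mul,
      integral_const_mul]
  -- bound ∫ ‖v‖²
  have hvbound : ∫ ω, ‖v ω‖ ^ 2 ∂μ
      ≤ (1 - 2 * a * σc + a ^ 2 * L ^ 2) * ∫ ω, ‖X ω - βstar‖ ^ 2 ∂μ := by
    rw [← integral_const_mul]
    refine integral_mono hIv (hIX.const_mul _) ?_
    intro ω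
    have h1 : ‖v ω‖ ^ 2 = ‖X ω - βstar‖ ^ 2 - 2 * a * ⟪X ω - βstar, gX ω⟫
        + a ^ 2 * ‖gX ω‖ ^ 2 := by
      rw [hv]
      simp only
      rw [norm_sub_sq_real, real_inner_smul_right, norm_smul, Real.norm_eq_abs,
        abs_of_nonneg ha]
      ring
    have h2 : σc * ‖X ω - βstar‖ ^ 2 ≤ ⟪X ω - βstar, gX ω⟫ := by
      have := hsc (X ω) βstar
      rw [real_inner_comm]
      simpa [hg0] using this
    have h3 : ‖gX ω‖ ^ 2 ≤ L ^ 2 * ‖X ω - βstar‖ ^ 2 := by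
      have := hgXbound ω
      nlinarith [norm_nonneg (gX ω), norm_nonneg (X ω - βstar)]
    simp only
    rw [h1]
    nlinarith [sq_nonneg a, mul_le_mul_of_nonneg_left h2 (mul_nonneg (by norm_num : (0:ℝ) ≤ 2) ha),
      mul_le_mul_of_nonneg_left h3 (sq_nonneg a)]
  -- bound ∫ ‖w‖²
  have hwbound : ∫ ω, ‖w ω‖ ^ 2 ∂μ ≤ C := by
    have h1 : ∫ ω, ‖w ω‖ ^ 2 ∂μ = ∫ ω, (μ[fun ωp => ‖Gn ωp - g (X ωp)‖ ^ 2 | mF]) ω ∂μ := by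
      rw [integral_condExp hm]
    rw [h1]
    calc ∫ ω, (μ[fun ωp => ‖Gn ωp - g (X ωp)‖ ^ 2 | mF]) ω ∂μ ≤ ∫ _, C ∂μ :=
      integral_mono_ae integrable_condExp (integrable_const C) hnoise
    _ = C := by simp
  have hC0 : 0 ≤ ∫ ω, ‖w ω‖ ^ 2 ∂μ := integral_nonneg fun ω => sq_nonneg _
  rw [hsplit, horth]
  have := mul_le_mul_of_nonneg_left hwbound (sq_nonneg a)
  nlinarith
/-- For SGD on a `σ`-strongly convex risk with `L`-Lipschitz gradient and
noise bound `C`, for any `δ > 0`: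
`P(‖θ_k - β*‖ ≤ δ) ≥ 1 - [‖θ₀ - β*‖² ∏_{j=0}^{k-1}(1 - 2α_j σ + α_j² L²) + C·A_{k-1}]/δ²`
(stated here for `k + 1`, so the product runs over `j = 0, …, k` and the
correction term is `A_k`). -/
theorem sgd_general_probability_lower_bound
    {Ω : Type*} [m : MeasurableSpace Ω] (μ : Measure Ω) [IsProbabilityMeasure μ]
    (d : ℕ)
    (F : ℕ → MeasurableSpace Ω) (hF : ∀ k, F k ≤ m)
    (σc L C : ℝ) (hσ : 0 < σc) (hL : 0 ≤ L) (hC : 0 ≤ C)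
    (α : ℕ → ℝ) (hα : ∀ k, 0 ≤ α k)
    (g : EuclideanSpace ℝ (Fin d) → EuclideanSpace ℝ (Fin d))
    (hsc : ∀ x y, σc * ‖x - y‖ ^ 2 ≤ ⟪g x - g y, x - y⟫)
    (hLip : ∀ x y, ‖g x - g y‖ ≤ L * ‖x - y‖)
    (βstar : EuclideanSpace ℝ (Fin d)) (hg0 : g βstar = 0)
    (θinit : EuclideanSpace ℝ (Fin d))
    (θ G : ℕ → Ω → EuclideanSpace ℝ (Fin d))
    (hθ0 : ∀ ω, θ 0 ω = θinit)
    (hrec : ∀ k ω, θ (k + 1) ω = θ k ω - α k • G (k + 1) ω)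
    (hθmeas : ∀ k, Measurable[F k] (θ k))
    (hθ2 : ∀ k, MemLp (θ k) 2 μ) (hG2 : ∀ k, MemLp (G k) 2 μ)
    (hmean : ∀ k, μ[G (k + 1) | F k] =ᵐ[μ] fun ω => g (θ k ω))
    (hnoise : ∀ k, ∀ᵐ ω ∂μ,
      (μ[fun ωp => ‖G (k + 1) ωp - g (θ k ωp)‖ ^ 2 | F k]) ω ≤ C)
    (hfac : ∀ k, 0 ≤ 1 - 2 * α k * σc + (α k) ^ 2 * L ^ 2)
    (k : ℕ) (δ : ℝ) (hδ : 0 < δ) :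
    1 - (‖θinit - βstar‖ ^ 2
          * ∏ j ∈ Finset.range (k + 1), (1 - 2 * α j * σc + (α j) ^ 2 * L ^ 2)
        + C * ((α k) ^ 2
            + ∑ j ∈ Finset.range k, (α j) ^ 2
                * ∏ l ∈ Finset.Ico (j + 1) (k + 1),
                    (1 - 2 * α l * σc + (α l) ^ 2 * L ^ 2))) / δ ^ 2
      ≤ (μ {ω | ‖θ (k + 1) ω - βstar‖ ≤ δ}).toReal := by
  have hstep : ∀ n, ∫ ω, ‖θ (n + 1) ω - βstar‖ ^ 2 ∂μ ≤
      (1 - 2 * α n * σc + (α n) ^ 2 * L ^ 2) * ∫ ω, ‖θ n ω - βstar‖ ^ 2 ∂μ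
        + C * (α n) ^ 2 := by
    intro n
    have h := sgd_step_aux (hF n) σc L C (α n) hL (hα n) g hsc hLip βstar hg0
      (θ n) (G (n + 1)) (hθmeas n) (hθ2 n) (hG2 (n + 1)) (hmean n) (hnoise n)
    simp_rw [hrec n]
    exact h
  have hmain : ∀ n, ∫ ω, ‖θ (n + 1) ω - βstar‖ ^ 2 ∂μ ≤
      ‖θinit - βstar‖ ^ 2
          * ∏ j ∈ Finset.range (n + 1), (1 - 2 * α j * σc + (α j) ^ 2 * L ^ 2)
        + C * ((α n) ^ 2
            + ∑ j ∈ Finset.range n, (α j) ^ 2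
                * ∏ l ∈ Finset.Ico (j + 1) (n + 1),
                    (1 - 2 * α l * σc + (α l) ^ 2 * L ^ 2)) := by
    intro n
    induction n with
    | zero =>
      have h := hstep 0
      have he0 : ∫ ω, ‖θ 0 ω - βstar‖ ^ 2 ∂μ = ‖θinit - βstar‖ ^ 2 := by
        simp [hθ0]
      rw [he0] at h
      simpa [mul_comm] using h
    | succ n ih =>
      have h := hstep (n + 1)
      have h2 := mul_le_mul_of_nonneg_left ih (hfac (n + 1))
      have h3 : ∫ ω, ‖θ (n + 2) ω - βstar‖ ^ 2 ∂μ ≤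
          (1 - 2 * α (n+1) * σc + (α (n+1)) ^ 2 * L ^ 2)
            * (‖θinit - βstar‖ ^ 2
                * ∏ j ∈ Finset.range (n + 1), (1 - 2 * α j * σc + (α j) ^ 2 * L ^ 2)
              + C * ((α n) ^ 2
                  + ∑ j ∈ Finset.range n, (α j) ^ 2
                      * ∏ l ∈ Finset.Ico (j + 1) (n + 1),
                          (1 - 2 * α l * σc + (α l) ^ 2 * L ^ 2)))
            + C * (α (n+1)) ^ 2 := by linarith
      refine h3.trans_eq ?_
      have hIcoTop : ∏ l ∈ Finset.Ico (n + 1) (n + 2),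
          (1 - 2 * α l * σc + (α l) ^ 2 * L ^ 2)
          = (1 - 2 * α (n+1) * σc + (α (n+1)) ^ 2 * L ^ 2) := by
        rw [Finset.prod_Ico_succ_top le_rfl, Finset.Ico_self, Finset.prod_empty, one_mul]
      have hsumeq : ∑ j ∈ Finset.range n, (α j) ^ 2
            * ∏ l ∈ Finset.Ico (j + 1) (n + 2), (1 - 2 * α l * σc + (α l) ^ 2 * L ^ 2)
          = (∑ j ∈ Finset.range n, (α j) ^ 2
              * ∏ l ∈ Finset.Ico (j + 1) (n + 1), (1 - 2 * α l * σc + (α l) ^ 2 * L ^ 2))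
            * (1 - 2 * α (n+1) * σc + (α (n+1)) ^ 2 * L ^ 2) := by
        rw [Finset.sum_mul]
        refine Finset.sum_congr rfl fun j hj => ?_
        rw [Finset.prod_Ico_succ_top (Nat.succ_le_succ (Finset.mem_range.mp hj).le)]
        ring
      conv_rhs => rw [Finset.prod_range_succ, Finset.sum_range_succ, hIcoTop, hsumeq]
      ring
  -- Chebyshev / Markov step
  have hmeasθ : Measurable (θ (k + 1)) := (hθmeas (k + 1)).mono (hF (k + 1)) le_rfl
  have hfmeas : Measurable fun ω => ‖θ (k + 1) ω - βstar‖ :=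
    (hmeasθ.sub measurable_const).norm
  set s : Set Ω := {ω | ‖θ (k + 1) ω - βstar‖ ≤ δ} with hs_def
  have hs : MeasurableSet s := measurableSet_le hfmeas measurable_const
  have hint : Integrable (fun ω => ‖θ (k + 1) ω - βstar‖ ^ 2) μ :=
    (((hθ2 (k + 1)).sub (memLp_const βstar)).norm).integrable_sq
  have hmarkov := mul_meas_ge_le_integral_of_nonneg (μ := μ)
    (f := fun ω => ‖θ (k + 1) ω - βstar‖ ^ 2)
    (ae_of_all μ fun ω => sq_nonneg _) hint (δ ^ 2)
  have hsub : sᶜ ⊆ {ω | δ ^ 2 ≤ ‖θ (k + 1) ω - βstar‖ ^ 2} := by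
    intro ω hω
    simp only [hs_def, Set.mem_compl_iff, Set.mem_setOf_eq, not_le] at hω
    exact Set.mem_setOf_eq ▸ (pow_le_pow_left₀ hδ.le hω.le 2)
  have hμsub : (μ sᶜ).toReal ≤
      (μ {ω | δ ^ 2 ≤ ‖θ (k + 1) ω - βstar‖ ^ 2}).toReal :=
    ENNReal.toReal_mono (measure_ne_top _ _) (measure_mono hsub)
  have hδ2 : (0:ℝ) < δ ^ 2 := pow_pos hδ 2
  have hcheb : (μ {ω | δ ^ 2 ≤ ‖θ (k + 1) ω - βstar‖ ^ 2}).toReal ≤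
      (∫ ω, ‖θ (k + 1) ω - βstar‖ ^ 2 ∂μ) / δ ^ 2 := by
    rw [le_div_iff₀ hδ2]
    rw [measureReal_def] at hmarkov
    linarith [hmarkov]
  have hone : (μ s).toReal + (μ sᶜ).toReal = 1 := by
    rw [← ENNReal.toReal_add (measure_ne_top μ s) (measure_ne_top μ sᶜ),
      measure_add_measure_compl hs, measure_univ, ENNReal.toReal_one]
  have hdiv : (∫ ω, ‖θ (k + 1) ω - βstar‖ ^ 2 ∂μ) / δ ^ 2 ≤
      (‖θinit - βstar‖ ^ 2
          * ∏ j ∈ Finset.range (k + 1), (1 - 2 * α j * σc + (α j) ^ 2 * L ^ 2)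
        + C * ((α k) ^ 2
            + ∑ j ∈ Finset.range k, (α j) ^ 2
                * ∏ l ∈ Finset.Ico (j + 1) (k + 1),
                    (1 - 2 * α l * σc + (α l) ^ 2 * L ^ 2))) / δ ^ 2 :=
    (div_le_div_iff_of_pos_right hδ2).mpr (hmain k)
  linarith
end
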